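/- Let G be a ground well-formed g-choreography with ⟦G⟧ ≠ ε. Then for every maximal configuration x ∈ MaxC(⟦G⟧): (1) the set of minimal events of x is nonempty and all their labels are output labels (in L^!), and the set of maximal events of x is nonempty and all their labels are input labels (in L^?); (2) the set of subjects of the labels of the events of x equals P(G). -/

import Mathlib

open scoped Classical

namespace Choreo

/-! ## Labels -/

/-- Communication labels: output `A B!m` and input `A B?m`. -/
inductive Label (P M : Type) where
  | out : P → P → M → Label P M
  | inp : P → P → M → Label P M

variable {P M : Type}

/-- The subject of a label: the sender of an output, the receiver of an input. -/
def Label.sbj : Label P M → P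
  | .out a _ _ => a
  | .inp _ b _ => b

/-- The set `L^!` of output labels (sender and receiver distinct). -/
def Lout : Set (Label P M) := {l | ∃ a b m, a ≠ b ∧ l = .out a b m}

/-- The set `L^?` of input labels (sender and receiver distinct). -/
def Lin : Set (Label P M) := {l | ∃ a b m, a ≠ b ∧ l = .inp a b m}

/-- `L̂(A)`: the labels in `L` whose subject is `A`. -/
def hat (L : Set (Label P M)) (A : P) : Set (Label P M) := {l ∈ L | l.sbj = A}

/-- `sbj(L)`: the set of subjects of the labels in `L`. -/
def sbjSet (L : Set (Label P M)) : Set P := Label.sbj '' L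

/-- `L − Π`: the labels in `L` whose subject is not in `Π`. -/
def lminus (L : Set (Label P M)) (Γ : Set P) : Set (Label P M) := {l ∈ L | l.sbj ∉ Γ}

/-! ## Labelled event structures (events drawn from ℕ) -/

/-- Data of a labelled (prime) event structure over events drawn from `ℕ`. -/
structure ES (P M : Type) where
  ev : Set ℕ
  le : ℕ → ℕ → Prop
  conf : ℕ → ℕ → Prop
  lbl : ℕ → Label P M

namespace ES

variable (E : ES P M)

/-- Configurations: downward-closed conflict-free sets of events. -/
def Config (x : Set ℕ) : Prop :=
  x ⊆ E.ev ∧ (∀ e ∈ x, ∀ f ∈ E.ev, E.le f e → f ∈ x) ∧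
    ∀ e ∈ x, ∀ f ∈ x, ¬ E.conf e f

/-- `MaxC E`: the ⊆-maximal configurations of `E`. -/
def MaxC : Set (Set ℕ) := {x | E.Config x ∧ ∀ y, E.Config y → x ⊆ y → y = x}

/-- Minimal events of `s ⊆ E.ev` with respect to `E.le`. -/
def minIn (s : Set ℕ) : Set ℕ := {e ∈ s | ∀ f ∈ s, E.le f e → f = e}

/-- Maximal events of `s ⊆ E.ev` with respect to `E.le`. -/
def maxIn (s : Set ℕ) : Set ℕ := {e ∈ s | ∀ f ∈ s, E.le e f → f = e}

def minEv : Set ℕ := E.minIn E.ev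
def maxEv : Set ℕ := E.maxIn E.ev

/-- Labels of the minimal events of `E`. -/
def minLbl : Set (Label P M) := E.lbl '' E.minEv

/-- Labels of the maximal events of `E`. -/
def maxLbl : Set (Label P M) := E.lbl '' E.maxEv

/-- All labels occurring in `E`. -/
def lblSet : Set (Label P M) := E.lbl '' E.ev

/-- The projection `E↾A`: the restriction of `E` to the events whose label has subject `A`. -/
def proj (A : P) : ES P M where
  ev := {e ∈ E.ev | (E.lbl e).sbj = A}
  le u v := E.le u v ∧ (u ∈ E.ev ∧ (E.lbl u).sbj = A) ∧ (v ∈ E.ev ∧ (E.lbl v).sbj = A)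
  conf u v := E.conf u v ∧ (u ∈ E.ev ∧ (E.lbl u).sbj = A) ∧ (v ∈ E.ev ∧ (E.lbl v).sbj = A)
  lbl := E.lbl

/-- The projection `x↾A` of a configuration (as a set of events of `E`). -/
def projC (x : Set ℕ) (A : P) : Set ℕ := {e ∈ x | (E.lbl e).sbj = A}

end ES

/-! ## Constructions on event structures -/

/-- Tag for the events of a left component. -/
def tagL (e : ℕ) : ℕ := Nat.pair 0 e
/-- Tag for the events of a right component. -/
def tagR (e : ℕ) : ℕ := Nat.pair 1 e
/-- Tag for the events of the copy of the second component indexed by (the code of) a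
maximal configuration of the first one. -/
def tagC (k e : ℕ) : ℕ := Nat.pair 1 (Nat.pair k e)

/-- A code (injective on finite sets) of sets of naturals. -/
noncomputable def encSet (x : Set ℕ) : ℕ :=
  if h : x.Finite then h.toFinset.sum (fun n => 2 ^ n) else 0

/-- The empty event structure `ε`. -/
noncomputable def esEmpty [Nonempty P] [Nonempty M] : ES P M where
  ev := ∅
  le _ _ := False
  conf _ _ := False
  lbl _ := Label.out Classical.ofNonempty Classical.ofNonempty Classical.ofNonempty

/-- `⟦A→B:m⟧`: two ordered events labelled `A B!m < A B?m`. -/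
def esAct (a b : P) (m : M) : ES P M where
  ev := {0, 1}
  le u v := (u = 0 ∧ v = 0) ∨ (u = 0 ∧ v = 1) ∨ (u = 1 ∧ v = 1)
  conf _ _ := False
  lbl e := if e = 0 then Label.out a b m else Label.inp a b m

/-- Tensor product `E1 ⊗ E2` (componentwise disjoint union). -/
def esTensor (E1 E2 : ES P M) : ES P M where
  ev := (tagL '' E1.ev) ∪ (tagR '' E2.ev)
  le u v := (∃ e ∈ E1.ev, ∃ f ∈ E1.ev, E1.le e f ∧ u = tagL e ∧ v = tagL f) ∨
            (∃ e ∈ E2.ev, ∃ f ∈ E2.ev, E2.le e f ∧ u = tagR e ∧ v = tagR f)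
  conf u v := (∃ e ∈ E1.ev, ∃ f ∈ E1.ev, E1.conf e f ∧ u = tagL e ∧ v = tagL f) ∨
              (∃ e ∈ E2.ev, ∃ f ∈ E2.ev, E2.conf e f ∧ u = tagR e ∧ v = tagR f)
  lbl u := if (Nat.unpair u).1 = 0 then E1.lbl (Nat.unpair u).2 else E2.lbl (Nat.unpair u).2

/-- Sum `E1 + E2`: disjoint union with all cross pairs of events in conflict. -/
def esSum (E1 E2 : ES P M) : ES P M :=
  { esTensor E1 E2 with
    conf := fun u v => (esTensor E1 E2).conf u v ∨
      (∃ e ∈ E1.ev, ∃ f ∈ E2.ev, (u = tagL e ∧ v = tagR f) ∨ (u = tagR f ∧ v = tagL e)) }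

/-- Sequential composition: appends to each maximal configuration `x` of `E1` a disjoint
copy of `E2`, ordering an event of `x` below an event of the copy whenever their labels
have the same subject. -/
noncomputable def esSeq (E1 E2 : ES P M) : ES P M where
  ev := (tagL '' E1.ev) ∪ {u | ∃ x ∈ E1.MaxC, ∃ e ∈ E2.ev, u = tagC (encSet x) e}
  le u v :=
    (∃ e ∈ E1.ev, ∃ f ∈ E1.ev, E1.le e f ∧ u = tagL e ∧ v = tagL f) ∨
    (∃ x ∈ E1.MaxC, ∃ e ∈ E2.ev, ∃ f ∈ E2.ev, E2.le e f ∧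
       u = tagC (encSet x) e ∧ v = tagC (encSet x) f) ∨
    (∃ x ∈ E1.MaxC, ∃ e ∈ x, ∃ f ∈ E2.ev, (E1.lbl e).sbj = (E2.lbl f).sbj ∧
       u = tagL e ∧ v = tagC (encSet x) f)
  conf u v :=
    (∃ e ∈ E1.ev, ∃ f ∈ E1.ev, E1.conf e f ∧ u = tagL e ∧ v = tagL f) ∨
    (∃ x ∈ E1.MaxC, ∃ e ∈ E2.ev, ∃ f ∈ E2.ev, E2.conf e f ∧
       u = tagC (encSet x) e ∧ v = tagC (encSet x) f) ∨
    (∃ x ∈ E1.MaxC, ∃ x' ∈ E1.MaxC, x ≠ x' ∧ ∃ e ∈ E2.ev, ∃ f ∈ E2.ev,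
       u = tagC (encSet x) e ∧ v = tagC (encSet x') f) ∨
    (∃ x ∈ E1.MaxC, ∃ e ∈ E1.ev, (∃ e' ∈ x, E1.conf e e') ∧ ∃ f ∈ E2.ev,
       ((u = tagL e ∧ v = tagC (encSet x) f) ∨ (u = tagC (encSet x) f ∧ v = tagL e)))
  lbl u := if (Nat.unpair u).1 = 0 then E1.lbl (Nat.unpair u).2
           else E2.lbl (Nat.unpair (Nat.unpair u).2).2

/-! ## Well-branchedness -/

/-- Labels of the minimal events of the projection `E↾A`. -/
def minLblP (E : ES P M) (A : P) : Set (Label P M) := (E.proj A).minLbl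

/-- `A` is active for the branches `E1`, `E2`. -/
def active (E1 E2 : ES P M) (A : P) : Prop :=
  minLblP E1 A ≠ ∅ ∧ minLblP E2 A ≠ ∅ ∧
  Disjoint (minLblP E1 A) (minLblP E2 A) ∧
  minLblP E1 A ∪ minLblP E2 A ⊆ Lout

/-- `B` is passive for the branches `E1`, `E2`. -/
def passive (E1 E2 : ES P M) (B : P) : Prop :=
  Disjoint (minLblP E1 B) (minLblP E2 B) ∧
  minLblP E1 B ∪ minLblP E2 B ⊆ Lin ∧
  (minLblP E1 B = ∅ ↔ minLblP E2 B = ∅)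

/-- Well-branchedness: a unique active participant, all other participants passive. -/
def wb (E1 E2 : ES P M) : Prop :=
  ∃ A, active E1 E2 A ∧ (∀ A', active E1 E2 A' → A' = A) ∧
    ∀ B, B ≠ A → passive E1 E2 B

/-! ## Ground g-choreographies and their semantics -/

/-- Ground g-choreographies: `G ::= 0 | A→B:m | G;G | G|G | G+G`. -/
inductive GC (P M : Type) where
  | nil : GC P M
  | act : P → P → M → GC P M
  | seq : GC P M → GC P M → GC P M
  | par : GC P M → GC P M → GC P M
  | cho : GC P M → GC P M → GC P M

/-- `P(G)`: the participants occurring in `G`. -/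
def parts : GC P M → Set P
  | .nil => ∅
  | .act a b _ => {a, b}
  | .seq g1 g2 => parts g1 ∪ parts g2
  | .par g1 g2 => parts g1 ∪ parts g2
  | .cho g1 g2 => parts g1 ∪ parts g2

/-- The semantics `⟦G⟧`: a labelled event structure, or `none` (i.e. `⊥`) when a side
condition fails (the grammar requires `A ≠ B` in interactions; parallel requires disjoint
label sets; choice requires well-branchedness). -/
noncomputable def gsem [Nonempty P] [Nonempty M] : GC P M → Option (ES P M)
  | .nil => some esEmpty
  | .act a b m => if a = b then none else some (esAct a b m)
  | .seq g1 g2 =>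
      match gsem g1, gsem g2 with
      | some E1, some E2 => some (esSeq E1 E2)
      | _, _ => none
  | .par g1 g2 =>
      match gsem g1, gsem g2 with
      | some E1, some E2 =>
          if Disjoint E1.lblSet E2.lblSet then some (esTensor E1 E2) else none
      | _, _ => none
  | .cho g1 g2 =>
      match gsem g1, gsem g2 with
      | some E1, some E2 => if wb E1 E2 then some (esSum E1 E2) else none
      | _, _ => none

/-! ## The typing system -/

/-- Output uniform sets of labels. -/
def outUniform (U V : Set (Label P M)) : Prop := Disjoint U V ∧ U ∪ V ⊆ Lout

/-- Input uniform sets of labels. -/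
def inUniform (U V : Set (Label P M)) : Prop := Disjoint U V ∧ U ∪ V ⊆ Lin

/-- The compatibility condition `compch(φ1,φ2,Π)` of rule t-ch. -/
def compch (φ1 φ2 : Set (Label P M)) (Γ : Set P) : Prop :=
  ∃ A ∈ Γ,
    (outUniform (hat φ1 A) (hat φ2 A) ∧ hat φ1 A ≠ ∅ ∧ hat φ2 A ≠ ∅) ∧
    (∀ A' ∈ Γ, (outUniform (hat φ1 A') (hat φ2 A') ∧ hat φ1 A' ≠ ∅ ∧ hat φ2 A' ≠ ∅) →
        A' = A) ∧
    ∀ B ∈ Γ, B ≠ A →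
      inUniform (hat φ1 B) (hat φ2 B) ∧ (hat φ1 B = ∅ ↔ hat φ2 B = ∅)

/-- The typing judgement `Π ⊢ G : ⟨φ,Λ⟩`. -/
inductive Typing : Set P → GC P M → Set (Label P M) → Set (Label P M) → Prop where
  | temp : Typing ∅ GC.nil ∅ ∅
  | tint {a b : P} {m : M} (hab : a ≠ b) :
      Typing {a, b} (GC.act a b m)
        {Label.out a b m, Label.inp a b m} {Label.out a b m, Label.inp a b m}
  | tseq {Γ1 Γ2 : Set P} {g1 g2 : GC P M} {φ1 φ2 Λ1 Λ2 : Set (Label P M)} :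
      Typing Γ1 g1 φ1 Λ1 → Typing Γ2 g2 φ2 Λ2 →
      Typing (Γ1 ∪ Γ2) (GC.seq g1 g2) (φ1 ∪ lminus φ2 Γ1) (Λ2 ∪ lminus Λ1 Γ2)
  | tpar {Γ1 Γ2 : Set P} {g1 g2 : GC P M} {φ1 φ2 Λ1 Λ2 : Set (Label P M)} :
      Typing Γ1 g1 φ1 Λ1 → Typing Γ2 g2 φ2 Λ2 → Γ1 ∩ Γ2 = ∅ →
      Typing (Γ1 ∪ Γ2) (GC.par g1 g2) (φ1 ∪ φ2) (Λ1 ∪ Λ2)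
  | tch {Γ : Set P} {g1 g2 : GC P M} {φ1 φ2 Λ1 Λ2 : Set (Label P M)} :
      Typing Γ g1 φ1 Λ1 → Typing Γ g2 φ2 Λ2 → compch φ1 φ2 Γ →
      Typing Γ (GC.cho g1 g2) (φ1 ∪ φ2) (Λ1 ∪ Λ2)


/-! ## One-hole contexts and their typing (hole axiom `Γh ⊢ [·] : ⟨φh,Λh⟩`) -/

/-- g-choreography contexts with a single hole. -/
inductive Ctx (P M : Type) where
  | hole : Ctx P M
  | seqL : Ctx P M → GC P M → Ctx P M
  | seqR : GC P M → Ctx P M → Ctx P M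
  | parL : Ctx P M → GC P M → Ctx P M
  | parR : GC P M → Ctx P M → Ctx P M
  | choL : Ctx P M → GC P M → Ctx P M
  | choR : GC P M → Ctx P M → Ctx P M

/-- `C.fill g = C[g]`, the replacement of the hole of `C` by `g`. -/
def Ctx.fill : Ctx P M → GC P M → GC P M
  | .hole, g => g
  | .seqL c g2, g => GC.seq (c.fill g) g2
  | .seqR g1 c, g => GC.seq g1 (c.fill g)
  | .parL c g2, g => GC.par (c.fill g) g2
  | .parR g1 c, g => GC.par g1 (c.fill g)
  | .choL c g2, g => GC.cho (c.fill g) g2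
  | .choR g1 c, g => GC.cho g1 (c.fill g)

/-- Typing of one-hole contexts in the type system extended with the axiom
`Γh ⊢ [·] : ⟨φh,Λh⟩` for the hole. -/
inductive CTyping (Γh : Set P) (φh Λh : Set (Label P M)) :
    Set P → Ctx P M → Set (Label P M) → Set (Label P M) → Prop where
  | hole : CTyping Γh φh Λh Γh Ctx.hole φh Λh
  | seqL {Γ1 Γ2 : Set P} {c : Ctx P M} {g : GC P M} {φ1 φ2 Λ1 Λ2 : Set (Label P M)} :
      CTyping Γh φh Λh Γ1 c φ1 Λ1 → Typing Γ2 g φ2 Λ2 →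
      CTyping Γh φh Λh (Γ1 ∪ Γ2) (Ctx.seqL c g) (φ1 ∪ lminus φ2 Γ1) (Λ2 ∪ lminus Λ1 Γ2)
  | seqR {Γ1 Γ2 : Set P} {g : GC P M} {c : Ctx P M} {φ1 φ2 Λ1 Λ2 : Set (Label P M)} :
      Typing Γ1 g φ1 Λ1 → CTyping Γh φh Λh Γ2 c φ2 Λ2 →
      CTyping Γh φh Λh (Γ1 ∪ Γ2) (Ctx.seqR g c) (φ1 ∪ lminus φ2 Γ1) (Λ2 ∪ lminus Λ1 Γ2)
  | parL {Γ1 Γ2 : Set P} {c : Ctx P M} {g : GC P M} {φ1 φ2 Λ1 Λ2 : Set (Label P M)} :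
      CTyping Γh φh Λh Γ1 c φ1 Λ1 → Typing Γ2 g φ2 Λ2 → Γ1 ∩ Γ2 = ∅ →
      CTyping Γh φh Λh (Γ1 ∪ Γ2) (Ctx.parL c g) (φ1 ∪ φ2) (Λ1 ∪ Λ2)
  | parR {Γ1 Γ2 : Set P} {g : GC P M} {c : Ctx P M} {φ1 φ2 Λ1 Λ2 : Set (Label P M)} :
      Typing Γ1 g φ1 Λ1 → CTyping Γh φh Λh Γ2 c φ2 Λ2 → Γ1 ∩ Γ2 = ∅ →
      CTyping Γh φh Λh (Γ1 ∪ Γ2) (Ctx.parR g c) (φ1 ∪ φ2) (Λ1 ∪ Λ2)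
  | choL {Γ : Set P} {c : Ctx P M} {g : GC P M} {φ1 φ2 Λ1 Λ2 : Set (Label P M)} :
      CTyping Γh φh Λh Γ c φ1 Λ1 → Typing Γ g φ2 Λ2 → compch φ1 φ2 Γ →
      CTyping Γh φh Λh Γ (Ctx.choL c g) (φ1 ∪ φ2) (Λ1 ∪ Λ2)
  | choR {Γ : Set P} {g : GC P M} {c : Ctx P M} {φ1 φ2 Λ1 Λ2 : Set (Label P M)} :
      Typing Γ g φ1 Λ1 → CTyping Γh φh Λh Γ c φ2 Λ2 → compch φ1 φ2 Γ →
      CTyping Γh φh Λh Γ (Ctx.choR g c) (φ1 ∪ φ2) (Λ1 ∪ Λ2)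

/-! ## Refinable actions, t-ref, and refinement -/

/-- The three side conditions of the axiom schema t-ref for the refinable action
`A → m1…mn : B1,…,Bn`, represented by the initiator `A` and the nonempty list
`l = [(m1,B1),…,(mn,Bn)]` with pairwise distinct `Bi`. -/
def trefCond (Γ : Set P) (φ Λ : Set (Label P M)) (A : P) (l : List (M × P)) : Prop :=
  l ≠ [] ∧ (l.map Prod.snd).Nodup ∧
  sbjSet φ = Γ ∧ sbjSet Λ = Γ ∧ sbjSet (φ ∩ Lout) = {A} ∧
  ∀ p ∈ l, ∃ C ∈ Γ, hat Λ p.2 = {Label.inp C p.2 p.1}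

/-- `G ref A→m1…mn:B1,…,Bn`: the ground g-choreography `G` refines the refinable action
given by initiator `A` and list `l = [(m1,B1),…,(mn,Bn)]`. -/
def Refines [Nonempty P] [Nonempty M] (G : GC P M) (A : P) (l : List (M × P)) : Prop :=
  ∃ E : ES P M, gsem G = some E ∧
    sbjSet E.minLbl = {A} ∧
    ∀ x ∈ E.MaxC, ∀ p ∈ l, ∃ C ∈ parts G,
      Label.inp C p.2 p.1 ∈ E.lbl '' (E.maxIn (E.projC x p.2))

/-! ## Multi-hole contexts -/

/-- g-choreography contexts with (numbered) holes. -/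
inductive MCtx (P M : Type) where
  | hole : ℕ → MCtx P M
  | nil : MCtx P M
  | act : P → P → M → MCtx P M
  | seq : MCtx P M → MCtx P M → MCtx P M
  | par : MCtx P M → MCtx P M → MCtx P M
  | cho : MCtx P M → MCtx P M → MCtx P M

/-- The (indices of the) holes occurring in a multi-hole context. -/
def MCtx.holes : MCtx P M → List ℕ
  | .hole i => [i]
  | .nil => []
  | .act _ _ _ => []
  | .seq c1 c2 => c1.holes ++ c2.holes
  | .par c1 c2 => c1.holes ++ c2.holes
  | .cho c1 c2 => c1.holes ++ c2.holes

/-- `C.fill g`: replace each hole `[·]i` by `g i`. -/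
def MCtx.fill : MCtx P M → (ℕ → GC P M) → GC P M
  | .hole i, g => g i
  | .nil, _ => GC.nil
  | .act a b m, _ => GC.act a b m
  | .seq c1 c2, g => GC.seq (c1.fill g) (c2.fill g)
  | .par c1 c2, g => GC.par (c1.fill g) (c2.fill g)
  | .cho c1 c2, g => GC.cho (c1.fill g) (c2.fill g)

/-- Typing of multi-hole contexts in the extended type system, where hole `i` is typed by
the axiom `(σ i).1 ⊢ [·]i : ⟨(σ i).2.1, (σ i).2.2⟩`. -/
inductive MTyping (σ : ℕ → Set P × Set (Label P M) × Set (Label P M)) :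
    Set P → MCtx P M → Set (Label P M) → Set (Label P M) → Prop where
  | hole (i : ℕ) : MTyping σ (σ i).1 (MCtx.hole i) (σ i).2.1 (σ i).2.2
  | temp : MTyping σ ∅ MCtx.nil ∅ ∅
  | tint {a b : P} {m : M} (hab : a ≠ b) :
      MTyping σ {a, b} (MCtx.act a b m)
        {Label.out a b m, Label.inp a b m} {Label.out a b m, Label.inp a b m}
  | tseq {Γ1 Γ2 : Set P} {c1 c2 : MCtx P M} {φ1 φ2 Λ1 Λ2 : Set (Label P M)} :
      MTyping σ Γ1 c1 φ1 Λ1 → MTyping σ Γ2 c2 φ2 Λ2 →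
      MTyping σ (Γ1 ∪ Γ2) (MCtx.seq c1 c2) (φ1 ∪ lminus φ2 Γ1) (Λ2 ∪ lminus Λ1 Γ2)
  | tpar {Γ1 Γ2 : Set P} {c1 c2 : MCtx P M} {φ1 φ2 Λ1 Λ2 : Set (Label P M)} :
      MTyping σ Γ1 c1 φ1 Λ1 → MTyping σ Γ2 c2 φ2 Λ2 → Γ1 ∩ Γ2 = ∅ →
      MTyping σ (Γ1 ∪ Γ2) (MCtx.par c1 c2) (φ1 ∪ φ2) (Λ1 ∪ Λ2)
  | tch {Γ : Set P} {c1 c2 : MCtx P M} {φ1 φ2 Λ1 Λ2 : Set (Label P M)} :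
      MTyping σ Γ c1 φ1 Λ1 → MTyping σ Γ c2 φ2 Λ2 → compch φ1 φ2 Γ →
      MTyping σ Γ (MCtx.cho c1 c2) (φ1 ∪ φ2) (Λ1 ∪ Λ2)


/-! ### Auxiliary development for the min-max lemma -/

section MinMaxAux

variable {P M : Type}

lemma tagL_inj : Function.Injective tagL := fun a b h => by
  have := congrArg (fun n => (Nat.unpair n).2) h
  simpa [tagL] using this

lemma tagR_inj : Function.Injective tagR := fun a b h => by
  have := congrArg (fun n => (Nat.unpair n).2) h
  simpa [tagR] using this

lemma tagC_inj {k e k' e' : ℕ} (h : tagC k e = tagC k' e') : k = k' ∧ e = e' := by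
  have h2 := congrArg (fun n => (Nat.unpair n).2) h
  simp only [tagC, Nat.unpair_pair] at h2
  constructor
  · have := congrArg (fun n => (Nat.unpair n).1) h2
    simpa using this
  · have := congrArg (fun n => (Nat.unpair n).2) h2
    simpa using this

lemma tagL_ne_tagR {e f : ℕ} : tagL e ≠ tagR f := fun h => by
  have := congrArg (fun n => (Nat.unpair n).1) h
  simp [tagL, tagR] at this

lemma tagL_ne_tagC {e k f : ℕ} : tagL e ≠ tagC k f := fun h => by
  have := congrArg (fun n => (Nat.unpair n).1) h
  simp [tagL, tagC] at this

lemma unpair_tagL (e : ℕ) : (Nat.unpair (tagL e)) = (0, e) := by simp [tagL]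
lemma unpair_tagR (e : ℕ) : (Nat.unpair (tagR e)) = (1, e) := by simp [tagR]
lemma unpair_tagC (k e : ℕ) : (Nat.unpair (tagC k e)) = (1, Nat.pair k e) := by simp [tagC]

lemma sum_two_pow_bitIndices (s : Finset ℕ) :
    Nat.bitIndices (∑ n ∈ s, 2 ^ n) = s.sort (· ≤ ·) := by
  have h1 : (∑ n ∈ s, 2 ^ n) = ((s.sort (· ≤ ·)).map (fun i => 2 ^ i)).sum := by
    rw [← Finset.sum_map_toList]
    exact (List.Perm.sum_eq (((Finset.sort_perm_toList s (· ≤ ·)).map _))).symm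
  rw [h1, Nat.bitIndices_sum_map_two_pow (Finset.sortedLT_sort s)]

lemma encSet_inj {x y : Set ℕ} (hx : x.Finite) (hy : y.Finite)
    (h : encSet x = encSet y) : x = y := by
  rw [encSet, dif_pos hx, encSet, dif_pos hy] at h
  have key : ∀ s t : Finset ℕ, (∑ n ∈ s, 2 ^ n) = (∑ n ∈ t, 2 ^ n) → s = t := by
    intro s t hst
    have := congrArg Nat.bitIndices hst
    rw [sum_two_pow_bitIndices, sum_two_pow_bitIndices] at this
    ext a
    rw [← Finset.mem_sort (α := ℕ) (· ≤ ·), this, Finset.mem_sort]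
  have := key hx.toFinset hy.toFinset h
  rw [← hx.coe_toFinset, ← hy.coe_toFinset, this]

/-- A rank function witnessing acyclicity of the causality relation. -/
def hasRank (E : ES P M) : Prop := ∃ ρ : ℕ → ℕ, ∀ u v, E.le u v → u ≠ v → ρ u < ρ v

/-- Structural sanity properties of the event structures arising from the semantics. -/
structure GoodES (E : ES P M) : Prop where
  fin : E.ev.Finite
  le_ev : ∀ u v, E.le u v → u ∈ E.ev ∧ v ∈ E.ev
  rank : hasRank E
  conf_symm : ∀ u v, E.conf u v → E.conf v u
  conf_irr : ∀ u, ¬ E.conf u u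
  conf_her : ∀ u v w, E.conf u v → E.le v w → E.conf u w

lemma exists_minIn (E : ES P M) (hr : hasRank E) {s : Set ℕ} (hf : s.Finite)
    (hn : s.Nonempty) : (E.minIn s).Nonempty := by
  obtain ⟨ρ, hρ⟩ := hr
  obtain ⟨e, he, hmin⟩ := Set.exists_min_image s ρ hf hn
  refine ⟨e, he, fun f hf' hle => ?_⟩
  by_contra hne
  exact absurd (hρ f e hle hne) (not_lt.2 (hmin f hf'))

lemma exists_maxIn (E : ES P M) (hr : hasRank E) {s : Set ℕ} (hf : s.Finite)
    (hn : s.Nonempty) : (E.maxIn s).Nonempty := by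
  obtain ⟨ρ, hρ⟩ := hr
  obtain ⟨e, he, hmax⟩ := Set.exists_max_image s ρ hf hn
  refine ⟨e, he, fun f hf' hle => ?_⟩
  by_contra hne
  exact absurd (hρ e f hle (Ne.symm hne)) (not_lt.2 (hmax f hf'))

/-- Downward closure of a single event. -/
def dc (E : ES P M) (e : ℕ) : Set ℕ := {f | f ∈ E.ev ∧ Relation.ReflTransGen E.le f e}

lemma conf_her_rtg {E : ES P M} (hG : GoodES E) {u v w : ℕ} (h : E.conf u v)
    (hvw : Relation.ReflTransGen E.le v w) : E.conf u w := by
  induction hvw with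
  | refl => exact h
  | tail _ hstep ih => exact hG.conf_her _ _ _ ih hstep

lemma dc_config {E : ES P M} (hG : GoodES E) {e : ℕ} (he : e ∈ E.ev) :
    E.Config (dc E e) ∧ e ∈ dc E e := by
  refine ⟨⟨fun f hf => hf.1, fun f hf g hg hle => ⟨hg, Relation.ReflTransGen.head hle hf.2⟩, ?_⟩,
    he, Relation.ReflTransGen.refl⟩
  intro a ha b hb hconf
  have h1 : E.conf a e := conf_her_rtg hG hconf hb.2
  have h2 : E.conf e e := conf_her_rtg hG (hG.conf_symm _ _ h1) ha.2
  exact hG.conf_irr e h2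

lemma config_empty (E : ES P M) : E.Config ∅ :=
  ⟨Set.empty_subset _, fun e he => absurd he (Set.notMem_empty e),
   fun e he => absurd he (Set.notMem_empty e)⟩

lemma extend_to_max (E : ES P M) (hfin : E.ev.Finite) {c : Set ℕ} (hc : E.Config c) :
    ∃ x ∈ E.MaxC, c ⊆ x := by
  have hT : {y | E.Config y ∧ c ⊆ y}.Finite :=
    hfin.finite_subsets.subset (fun y hy => hy.1.1)
  have hTne : {y | E.Config y ∧ c ⊆ y}.Nonempty := ⟨c, hc, subset_rfl⟩
  obtain ⟨x, hx, hmax⟩ := Set.Finite.exists_maximalFor id _ hT hTne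
  exact ⟨x, ⟨hx.1, fun y hy hxy => Set.Subset.antisymm (hmax ⟨hy, hx.2.trans hxy⟩ hxy) hxy⟩, hx.2⟩

lemma maxc_nonempty {E : ES P M} (hG : GoodES E) (hne : E.ev ≠ ∅) {x : Set ℕ}
    (hx : x ∈ E.MaxC) : x.Nonempty := by
  rcases Set.eq_empty_or_nonempty x with h | h
  · obtain ⟨e, he⟩ := Set.nonempty_iff_ne_empty.2 hne
    obtain ⟨hcfg, hee⟩ := dc_config hG he
    have := hx.2 _ hcfg (h ▸ Set.empty_subset _)
    rw [this] at hee
    exact absurd (h ▸ hee) (Set.notMem_empty e)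
  · exact h

lemma mem_maxc {E : ES P M} (hG : GoodES E) {e : ℕ} (he : e ∈ E.ev) :
    ∃ x ∈ E.MaxC, e ∈ x := by
  obtain ⟨x, hx, hsub⟩ := extend_to_max E hG.fin (dc_config hG he).1
  exact ⟨x, hx, hsub (dc_config hG he).2⟩

lemma maxc_encSet_inj {E1 : ES P M} (hfin : E1.ev.Finite) {x x' : Set ℕ}
    (hx : x ∈ E1.MaxC) (hx' : x' ∈ E1.MaxC) (h : encSet x = encSet x') : x = x' :=
  encSet_inj (hfin.subset hx.1.1) (hfin.subset hx'.1.1) h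

/-! ### Field computations for the constructions -/

lemma tensor_lbl_L (E1 E2 : ES P M) (e : ℕ) : (esTensor E1 E2).lbl (tagL e) = E1.lbl e := by
  simp [esTensor, tagL]

lemma tensor_lbl_R (E1 E2 : ES P M) (e : ℕ) : (esTensor E1 E2).lbl (tagR e) = E2.lbl e := by
  simp [esTensor, tagR]

lemma sum_ev (E1 E2 : ES P M) : (esSum E1 E2).ev = (esTensor E1 E2).ev := rfl
lemma sum_le (E1 E2 : ES P M) : (esSum E1 E2).le = (esTensor E1 E2).le := rfl
lemma sum_lbl (E1 E2 : ES P M) : (esSum E1 E2).lbl = (esTensor E1 E2).lbl := rfl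

lemma seq_lbl_L (E1 E2 : ES P M) (e : ℕ) : (esSeq E1 E2).lbl (tagL e) = E1.lbl e := by
  simp [esSeq, tagL]

lemma seq_lbl_C (E1 E2 : ES P M) (k e : ℕ) : (esSeq E1 E2).lbl (tagC k e) = E2.lbl e := by
  simp [esSeq, tagC]

/-! ### Goodness of the constructions -/

lemma good_esEmpty [Nonempty P] [Nonempty M] : GoodES (esEmpty : ES P M) := by
  refine ⟨?_, ?_, ⟨id, ?_⟩, ?_, ?_, ?_⟩ <;> simp [esEmpty]

lemma good_esAct (a b : P) (m : M) : GoodES (esAct a b m) := by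
  refine ⟨?_, ?_, ⟨id, ?_⟩, ?_, ?_, ?_⟩
  · exact (Set.finite_singleton 1).insert 0
  · rintro u v (⟨rfl, rfl⟩ | ⟨rfl, rfl⟩ | ⟨rfl, rfl⟩) <;> simp [esAct]
  · rintro u v (⟨rfl, rfl⟩ | ⟨rfl, rfl⟩ | ⟨rfl, rfl⟩) hne <;> simp_all
  · rintro u v h; exact h.elim
  · rintro u h; exact h
  · rintro u v w h; exact h.elim

lemma good_tensor {E1 E2 : ES P M} (h1 : GoodES E1) (h2 : GoodES E2) :
    GoodES (esTensor E1 E2) := by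
  obtain ⟨ρ1, hρ1⟩ := h1.rank
  obtain ⟨ρ2, hρ2⟩ := h2.rank
  refine ⟨(h1.fin.image tagL).union (h2.fin.image tagR), ?_,
    ⟨fun u => if (Nat.unpair u).1 = 0 then ρ1 (Nat.unpair u).2 else ρ2 (Nat.unpair u).2, ?_⟩,
    ?_, ?_, ?_⟩
  · rintro u v (⟨e, he, f, hf, _, rfl, rfl⟩ | ⟨e, he, f, hf, _, rfl, rfl⟩)
    · exact ⟨Or.inl ⟨e, he, rfl⟩, Or.inl ⟨f, hf, rfl⟩⟩
    · exact ⟨Or.inr ⟨e, he, rfl⟩, Or.inr ⟨f, hf, rfl⟩⟩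
  · rintro u v (⟨e, he, f, hf, hle, rfl, rfl⟩ | ⟨e, he, f, hf, hle, rfl, rfl⟩) hne
    · simp only [unpair_tagL]
      exact hρ1 e f hle (fun h => hne (congrArg tagL h))
    · simp only [unpair_tagR]
      simp only [if_neg one_ne_zero]
      exact hρ2 e f hle (fun h => hne (congrArg tagR h))
  · rintro u v (⟨e, he, f, hf, hc, rfl, rfl⟩ | ⟨e, he, f, hf, hc, rfl, rfl⟩)
    · exact Or.inl ⟨f, hf, e, he, h1.conf_symm _ _ hc, rfl, rfl⟩
    · exact Or.inr ⟨f, hf, e, he, h2.conf_symm _ _ hc, rfl, rfl⟩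
  · rintro u (⟨e, he, f, hf, hc, rfl, h⟩ | ⟨e, he, f, hf, hc, rfl, h⟩)
    · exact h1.conf_irr e (tagL_inj h ▸ hc)
    · exact h2.conf_irr e (tagR_inj h ▸ hc)
  · rintro u v w (⟨e, he, f, hf, hc, rfl, rfl⟩ | ⟨e, he, f, hf, hc, rfl, rfl⟩)
      (⟨e', he', f', hf', hle, heq, rfl⟩ | ⟨e', he', f', hf', hle, heq, rfl⟩)
    · exact Or.inl ⟨e, he, f', hf', h1.conf_her _ _ _ hc (tagL_inj heq ▸ hle), rfl, rfl⟩
    · exact absurd heq tagL_ne_tagR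
    · exact absurd heq.symm tagL_ne_tagR
    · exact Or.inr ⟨e, he, f', hf', h2.conf_her _ _ _ hc (tagR_inj heq ▸ hle), rfl, rfl⟩

lemma good_sum {E1 E2 : ES P M} (h1 : GoodES E1) (h2 : GoodES E2) :
    GoodES (esSum E1 E2) := by
  have hT := good_tensor h1 h2
  refine ⟨hT.fin, hT.le_ev, hT.rank, ?_, ?_, ?_⟩
  · rintro u v (h | ⟨e, he, f, hf, (⟨rfl, rfl⟩ | ⟨rfl, rfl⟩)⟩)
    · exact Or.inl (hT.conf_symm _ _ h)
    · exact Or.inr ⟨e, he, f, hf, Or.inr ⟨rfl, rfl⟩⟩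
    · exact Or.inr ⟨e, he, f, hf, Or.inl ⟨rfl, rfl⟩⟩
  · rintro u (h | ⟨e, he, f, hf, (⟨rfl, h⟩ | ⟨rfl, h⟩)⟩)
    · exact hT.conf_irr u h
    · exact absurd h tagL_ne_tagR
    · exact absurd h.symm tagL_ne_tagR
  · rintro u v w (h | ⟨e, he, f, hf, (⟨rfl, rfl⟩ | ⟨rfl, rfl⟩)⟩) hle
    · exact Or.inl (hT.conf_her _ _ _ h hle)
    · rcases hle with ⟨e', he', f', hf', _, heq, rfl⟩ | ⟨e', he', f', hf', hle', heq, rfl⟩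
      · exact absurd heq.symm tagL_ne_tagR
      · exact Or.inr ⟨e, he, f', hf', Or.inl ⟨rfl, rfl⟩⟩
    · rcases hle with ⟨e', he', f', hf', hle', heq, rfl⟩ | ⟨e', he', f', hf', _, heq, rfl⟩
      · exact Or.inr ⟨f', hf', f, hf, Or.inr ⟨rfl, rfl⟩⟩
      · exact absurd heq tagL_ne_tagR

lemma maxc_finite {E : ES P M} (hfin : E.ev.Finite) : E.MaxC.Finite :=
  hfin.finite_subsets.subset (fun x hx => hx.1.1)

lemma good_seq {E1 E2 : ES P M} (h1 : GoodES E1) (h2 : GoodES E2) :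
    GoodES (esSeq E1 E2) := by
  obtain ⟨ρ1, hρ1⟩ := h1.rank
  obtain ⟨ρ2, hρ2⟩ := h2.rank
  obtain ⟨b, hb⟩ := (h1.fin.image ρ1).bddAbove
  have hN : ∀ e ∈ E1.ev, ρ1 e < b + 1 := fun e he =>
    Nat.lt_succ_of_le (hb ⟨e, he, rfl⟩)
  refine ⟨?_, ?_, ⟨fun u => if (Nat.unpair u).1 = 0 then ρ1 (Nat.unpair u).2
      else (b + 1) + ρ2 (Nat.unpair (Nat.unpair u).2).2, ?_⟩, ?_, ?_, ?_⟩
  · refine (h1.fin.image tagL).union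
      ((((maxc_finite h1.fin).prod h2.fin).image
        (fun p => tagC (encSet p.1) p.2)).subset ?_)
    rintro u ⟨x, hx, e, he, rfl⟩
    exact ⟨(x, e), ⟨hx, he⟩, rfl⟩
  · rintro u v (⟨e, he, f, hf, _, rfl, rfl⟩ | ⟨x, hx, e, he, f, hf, _, rfl, rfl⟩ |
      ⟨x, hx, e, he, f, hf, _, rfl, rfl⟩)
    · exact ⟨Or.inl ⟨e, he, rfl⟩, Or.inl ⟨f, hf, rfl⟩⟩
    · exact ⟨Or.inr ⟨x, hx, e, he, rfl⟩, Or.inr ⟨x, hx, f, hf, rfl⟩⟩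
    · exact ⟨Or.inl ⟨e, hx.1.1 he, rfl⟩, Or.inr ⟨x, hx, f, hf, rfl⟩⟩
  · rintro u v (⟨e, he, f, hf, hle, rfl, rfl⟩ | ⟨x, hx, e, he, f, hf, hle, rfl, rfl⟩ |
      ⟨x, hx, e, he, f, hf, _, rfl, rfl⟩) hne
    · simp only [unpair_tagL]
      exact hρ1 e f hle (fun h => hne (congrArg tagL h))
    · simp only [unpair_tagC, Nat.unpair_pair, if_neg one_ne_zero]
      exact Nat.add_lt_add_left
        (hρ2 e f hle (fun h => hne (by rw [h]))) _
    · simp only [unpair_tagL, unpair_tagC, Nat.unpair_pair, if_neg one_ne_zero]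
      exact lt_of_lt_of_le (hN e (hx.1.1 he)) (Nat.le_add_right _ _)
  · rintro u v (⟨e, he, f, hf, hc, rfl, rfl⟩ | ⟨x, hx, e, he, f, hf, hc, rfl, rfl⟩ |
      ⟨x, hx, x', hx', hne, e, he, f, hf, rfl, rfl⟩ |
      ⟨x, hx, e, he, hce, f, hf, (⟨rfl, rfl⟩ | ⟨rfl, rfl⟩)⟩)
    · exact Or.inl ⟨f, hf, e, he, h1.conf_symm _ _ hc, rfl, rfl⟩
    · exact Or.inr (Or.inl ⟨x, hx, f, hf, e, he, h2.conf_symm _ _ hc, rfl, rfl⟩)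
    · exact Or.inr (Or.inr (Or.inl ⟨x', hx', x, hx, hne.symm, f, hf, e, he, rfl, rfl⟩))
    · exact Or.inr (Or.inr (Or.inr ⟨x, hx, e, he, hce, f, hf, Or.inr ⟨rfl, rfl⟩⟩))
    · exact Or.inr (Or.inr (Or.inr ⟨x, hx, e, he, hce, f, hf, Or.inl ⟨rfl, rfl⟩⟩))
  · rintro u (⟨e, he, f, hf, hc, rfl, h⟩ | ⟨x, hx, e, he, f, hf, hc, rfl, h⟩ |
      ⟨x, hx, x', hx', hne, e, he, f, hf, rfl, h⟩ |
      ⟨x, hx, e, he, hce, f, hf, (⟨rfl, h⟩ | ⟨rfl, h⟩)⟩)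
    · exact h1.conf_irr e (tagL_inj h ▸ hc)
    · exact h2.conf_irr e ((tagC_inj h).2 ▸ hc)
    · exact hne (maxc_encSet_inj h1.fin hx hx' (tagC_inj h).1)
    · exact absurd h tagL_ne_tagC
    · exact absurd h.symm tagL_ne_tagC
  · rintro u v w (⟨e, he, f, hf, hc, rfl, rfl⟩ | ⟨x, hx, e, he, f, hf, hc, rfl, rfl⟩ |
      ⟨x, hx, x', hx', hxne, e, he, f, hf, rfl, rfl⟩ |
      ⟨x, hx, e, he, hce, f, hf, (⟨rfl, rfl⟩ | ⟨rfl, rfl⟩)⟩) hle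
    -- conf case 1 : (tagL e, tagL f)
    · rcases hle with ⟨e', he', f', hf', hle', heq, rfl⟩ |
        ⟨y, hy, e', he', f', hf', hle', heq, rfl⟩ |
        ⟨y, hy, e', he', f', hf', hs, heq, rfl⟩
      · exact Or.inl ⟨e, he, f', hf', h1.conf_her _ _ _ hc (tagL_inj heq ▸ hle'), rfl, rfl⟩
      · exact absurd heq tagL_ne_tagC
      · exact Or.inr (Or.inr (Or.inr ⟨y, hy, e, he,
          ⟨e', he', tagL_inj heq ▸ hc⟩, f', hf', Or.inl ⟨rfl, rfl⟩⟩))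
    -- conf case 2 : (tagC x e, tagC x f)
    · rcases hle with ⟨e', he', f', hf', hle', heq, rfl⟩ |
        ⟨y, hy, e', he', f', hf', hle', heq, rfl⟩ |
        ⟨y, hy, e', he', f', hf', hs, heq, rfl⟩
      · exact absurd heq tagL_ne_tagC.symm
      · obtain ⟨hk, hef⟩ := tagC_inj heq
        have hxy : x = y := maxc_encSet_inj h1.fin hx hy hk
        subst hxy
        exact Or.inr (Or.inl ⟨x, hx, e, he, f', hf', h2.conf_her _ _ _ hc (hef ▸ hle'), rfl, rfl⟩)
      · exact absurd heq tagL_ne_tagC.symm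
    -- conf case 3 : (tagC x e, tagC x' f), x ≠ x'
    · rcases hle with ⟨e', he', f', hf', hle', heq, rfl⟩ |
        ⟨y, hy, e', he', f', hf', hle', heq, rfl⟩ |
        ⟨y, hy, e', he', f', hf', hs, heq, rfl⟩
      · exact absurd heq tagL_ne_tagC.symm
      · obtain ⟨hk, hef⟩ := tagC_inj heq
        have hxy : x' = y := maxc_encSet_inj h1.fin hx' hy hk
        subst hxy
        exact Or.inr (Or.inr (Or.inl ⟨x, hx, x', hx', hxne, e, he, f', hf', rfl, rfl⟩))
      · exact absurd heq tagL_ne_tagC.symm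
    -- conf case 4, orientation (tagL e, tagC x f)
    · rcases hle with ⟨e', he', f', hf', hle', heq, rfl⟩ |
        ⟨y, hy, e', he', f', hf', hle', heq, rfl⟩ |
        ⟨y, hy, e', he', f', hf', hs, heq, rfl⟩
      · exact absurd heq tagL_ne_tagC.symm
      · obtain ⟨hk, hef⟩ := tagC_inj heq
        have hxy : x = y := maxc_encSet_inj h1.fin hx hy hk
        subst hxy
        exact Or.inr (Or.inr (Or.inr ⟨x, hx, e, he, hce, f', hf', Or.inl ⟨rfl, rfl⟩⟩))
      · exact absurd heq tagL_ne_tagC.symm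
    -- conf case 4, orientation (tagC x f, tagL e)
    · rcases hle with ⟨e', he', f', hf', hle', heq, rfl⟩ |
        ⟨y, hy, e', he', f', hf', hle', heq, rfl⟩ |
        ⟨y, hy, e', he', f', hf', hs, heq, rfl⟩
      · obtain ⟨e'', he'', hce''⟩ := hce
        have hee : e = e' := tagL_inj heq
        subst hee
        refine Or.inr (Or.inr (Or.inr ⟨x, hx, f', hf', ⟨e'', he'', ?_⟩, f, hf, Or.inr ⟨rfl, rfl⟩⟩))
        exact h1.conf_symm _ _ (h1.conf_her _ _ _ (h1.conf_symm _ _ hce'') hle')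
      · exact absurd heq tagL_ne_tagC
      · have hee : e = e' := tagL_inj heq
        subst hee
        by_cases hxy : x = y
        · subst hxy
          obtain ⟨e'', he'', hce''⟩ := hce
          exact absurd hce'' (hx.1.2.2 e he' e'' he'')
        · exact Or.inr (Or.inr (Or.inl ⟨x, hx, y, hy, hxy, f, hf, f', hf', rfl, rfl⟩))

lemma mem_tagL_of_union {x1 x2 : Set ℕ} {e : ℕ} {t : ℕ → ℕ}
    (ht : ∀ a b, tagL a ≠ t b) (h : tagL e ∈ tagL '' x1 ∪ t '' x2) : e ∈ x1 := by
  rcases h with ⟨a, ha, heq⟩ | ⟨a, ha, heq⟩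
  · rwa [← tagL_inj heq]
  · exact absurd heq.symm (ht e a)

lemma tensor_maxc {E1 E2 : ES P M} (h1 : GoodES E1) (h2 : GoodES E2) {z : Set ℕ}
    (hz : z ∈ (esTensor E1 E2).MaxC) :
    ∃ x1 ∈ E1.MaxC, ∃ x2 ∈ E2.MaxC, z = tagL '' x1 ∪ tagR '' x2 := by
  set x1 : Set ℕ := {e | e ∈ E1.ev ∧ tagL e ∈ z} with hx1def
  set x2 : Set ℕ := {e | e ∈ E2.ev ∧ tagR e ∈ z} with hx2def
  have hc1 : E1.Config x1 := by
    refine ⟨fun e he => he.1, fun e he f hf hle => ⟨hf, ?_⟩, fun e he f hf hc => ?_⟩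
    · exact hz.1.2.1 (tagL e) he.2 (tagL f) (Or.inl ⟨f, hf, rfl⟩)
        (Or.inl ⟨f, hf, e, he.1, hle, rfl, rfl⟩)
    · exact hz.1.2.2 _ he.2 _ hf.2 (Or.inl ⟨e, he.1, f, hf.1, hc, rfl, rfl⟩)
  have hc2 : E2.Config x2 := by
    refine ⟨fun e he => he.1, fun e he f hf hle => ⟨hf, ?_⟩, fun e he f hf hc => ?_⟩
    · exact hz.1.2.1 (tagR e) he.2 (tagR f) (Or.inr ⟨f, hf, rfl⟩)
        (Or.inr ⟨f, hf, e, he.1, hle, rfl, rfl⟩)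
    · exact hz.1.2.2 _ he.2 _ hf.2 (Or.inr ⟨e, he.1, f, hf.1, hc, rfl, rfl⟩)
  have hzeq : z = tagL '' x1 ∪ tagR '' x2 := by
    ext u
    constructor
    · intro hu
      rcases hz.1.1 hu with ⟨e, he, rfl⟩ | ⟨e, he, rfl⟩
      · exact Or.inl ⟨e, ⟨he, hu⟩, rfl⟩
      · exact Or.inr ⟨e, ⟨he, hu⟩, rfl⟩
    · rintro (⟨e, he, rfl⟩ | ⟨e, he, rfl⟩)
      · exact he.2
      · exact he.2
  refine ⟨x1, ⟨hc1, fun y1 hy1 hsub => ?_⟩, x2, ⟨hc2, fun y2 hy2 hsub => ?_⟩, hzeq⟩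
  · have hz' : (esTensor E1 E2).Config (tagL '' y1 ∪ tagR '' x2) := by
      refine ⟨?_, ?_, ?_⟩
      · rintro u (⟨e, he, rfl⟩ | ⟨e, he, rfl⟩)
        · exact Or.inl ⟨e, hy1.1 he, rfl⟩
        · exact Or.inr ⟨e, hc2.1 he, rfl⟩
      · rintro v hv f hfev (⟨a, ha, b, hb, hab, rfl, rfl⟩ | ⟨a, ha, b, hb, hab, rfl, rfl⟩)
        · exact Or.inl ⟨a, hy1.2.1 b (mem_tagL_of_union (fun _ _ => tagL_ne_tagR) hv) a ha hab, rfl⟩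
        · have hbx : b ∈ x2 := by
            rcases hv with ⟨c, hc, heq⟩ | ⟨c, hc, heq⟩
            · exact absurd heq (tagL_ne_tagR)
            · rwa [← tagR_inj heq]
          exact Or.inr ⟨a, hc2.2.1 b hbx a ha hab, rfl⟩
      · rintro u hu v hv (⟨a, ha, b, hb, hab, rfl, rfl⟩ | ⟨a, ha, b, hb, hab, rfl, rfl⟩)
        · exact hy1.2.2 a (mem_tagL_of_union (fun _ _ => tagL_ne_tagR) hu)
            b (mem_tagL_of_union (fun _ _ => tagL_ne_tagR) hv) hab
        · have hax : a ∈ x2 := by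
            rcases hu with ⟨c, hc, heq⟩ | ⟨c, hc, heq⟩
            · exact absurd heq (tagL_ne_tagR)
            · rwa [← tagR_inj heq]
          have hbx : b ∈ x2 := by
            rcases hv with ⟨c, hc, heq⟩ | ⟨c, hc, heq⟩
            · exact absurd heq (tagL_ne_tagR)
            · rwa [← tagR_inj heq]
          exact hc2.2.2 a hax b hbx hab
    have hss : z ⊆ tagL '' y1 ∪ tagR '' x2 := by
      rw [hzeq]
      exact Set.union_subset_union_left _ (Set.image_mono hsub)
    have heq := hz.2 _ hz' hss
    refine Set.Subset.antisymm (fun e he => ?_) hsub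
    have : tagL e ∈ z := heq ▸ Or.inl ⟨e, he, rfl⟩
    exact ⟨hy1.1 he, this⟩
  · have hz' : (esTensor E1 E2).Config (tagL '' x1 ∪ tagR '' y2) := by
      refine ⟨?_, ?_, ?_⟩
      · rintro u (⟨e, he, rfl⟩ | ⟨e, he, rfl⟩)
        · exact Or.inl ⟨e, hc1.1 he, rfl⟩
        · exact Or.inr ⟨e, hy2.1 he, rfl⟩
      · rintro v hv f hfev (⟨a, ha, b, hb, hab, rfl, rfl⟩ | ⟨a, ha, b, hb, hab, rfl, rfl⟩)
        · exact Or.inl ⟨a, hc1.2.1 b (mem_tagL_of_union (fun _ _ => tagL_ne_tagR) hv) a ha hab, rfl⟩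
        · have hbx : b ∈ y2 := by
            rcases hv with ⟨c, hc, heq⟩ | ⟨c, hc, heq⟩
            · exact absurd heq (tagL_ne_tagR)
            · rwa [← tagR_inj heq]
          exact Or.inr ⟨a, hy2.2.1 b hbx a ha hab, rfl⟩
      · rintro u hu v hv (⟨a, ha, b, hb, hab, rfl, rfl⟩ | ⟨a, ha, b, hb, hab, rfl, rfl⟩)
        · exact hc1.2.2 a (mem_tagL_of_union (fun _ _ => tagL_ne_tagR) hu)
            b (mem_tagL_of_union (fun _ _ => tagL_ne_tagR) hv) hab
        · have hax : a ∈ y2 := by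
            rcases hu with ⟨c, hc, heq⟩ | ⟨c, hc, heq⟩
            · exact absurd heq (tagL_ne_tagR)
            · rwa [← tagR_inj heq]
          have hbx : b ∈ y2 := by
            rcases hv with ⟨c, hc, heq⟩ | ⟨c, hc, heq⟩
            · exact absurd heq (tagL_ne_tagR)
            · rwa [← tagR_inj heq]
          exact hy2.2.2 a hax b hbx hab
    have hss : z ⊆ tagL '' x1 ∪ tagR '' y2 := by
      rw [hzeq]
      exact Set.union_subset_union_right _ (Set.image_mono hsub)
    have heq := hz.2 _ hz' hss
    refine Set.Subset.antisymm (fun e he => ?_) hsub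
    have : tagR e ∈ z := heq ▸ Or.inr ⟨e, he, rfl⟩
    exact ⟨hy2.1 he, this⟩

lemma sum_maxc {E1 E2 : ES P M} (h1 : GoodES E1) (h2 : GoodES E2) {z : Set ℕ}
    (hz : z ∈ (esSum E1 E2).MaxC) :
    (∃ x1 ∈ E1.MaxC, z = tagL '' x1) ∨ (∃ x2 ∈ E2.MaxC, z = tagR '' x2) := by
  by_cases hR : ∃ f ∈ E2.ev, tagR f ∈ z
  · obtain ⟨f0, hf0, hf0z⟩ := hR
    right
    set x2 : Set ℕ := {e | e ∈ E2.ev ∧ tagR e ∈ z} with hx2def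
    have hnoL : ∀ e ∈ E1.ev, tagL e ∉ z := by
      intro e he hez
      exact hz.1.2.2 _ hez _ hf0z (Or.inr ⟨e, he, f0, hf0, Or.inl ⟨rfl, rfl⟩⟩)
    have hc2 : E2.Config x2 := by
      refine ⟨fun e he => he.1, fun e he f hf hle => ⟨hf, ?_⟩, fun e he f hf hc => ?_⟩
      · exact hz.1.2.1 (tagR e) he.2 (tagR f) (Or.inr ⟨f, hf, rfl⟩)
          (Or.inr ⟨f, hf, e, he.1, hle, rfl, rfl⟩)
      · exact hz.1.2.2 _ he.2 _ hf.2 (Or.inl (Or.inr ⟨e, he.1, f, hf.1, hc, rfl, rfl⟩))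
    have hzeq : z = tagR '' x2 := by
      ext u
      constructor
      · intro hu
        rcases hz.1.1 hu with ⟨e, he, rfl⟩ | ⟨e, he, rfl⟩
        · exact absurd hu (hnoL e he)
        · exact ⟨e, ⟨he, hu⟩, rfl⟩
      · rintro ⟨e, he, rfl⟩
        exact he.2
    refine ⟨x2, ⟨hc2, fun y2 hy2 hsub => ?_⟩, hzeq⟩
    have hz' : (esSum E1 E2).Config (tagR '' y2) := by
      refine ⟨?_, ?_, ?_⟩
      · rintro u ⟨e, he, rfl⟩
        exact Or.inr ⟨e, hy2.1 he, rfl⟩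
      · rintro v hv f hfev (⟨a, ha, b, hb, hab, rfl, rfl⟩ | ⟨a, ha, b, hb, hab, rfl, rfl⟩)
        · obtain ⟨c, hc, heq⟩ := hv
          exact absurd heq (tagL_ne_tagR).symm
        · have hbx : b ∈ y2 := by
            obtain ⟨c, hc, heq⟩ := hv
            rwa [← tagR_inj heq]
          exact ⟨a, hy2.2.1 b hbx a ha hab, rfl⟩
      · rintro u hu v hv ((⟨a, ha, b, hb, hab, rfl, rfl⟩ | ⟨a, ha, b, hb, hab, rfl, rfl⟩) |
          ⟨a, ha, b, hb, (⟨rfl, rfl⟩ | ⟨rfl, rfl⟩)⟩)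
        · obtain ⟨c, hc, heq⟩ := hu
          exact absurd heq (tagL_ne_tagR).symm
        · have hax : a ∈ y2 := by
            obtain ⟨c, hc, heq⟩ := hu
            rwa [← tagR_inj heq]
          have hbx : b ∈ y2 := by
            obtain ⟨c, hc, heq⟩ := hv
            rwa [← tagR_inj heq]
          exact hy2.2.2 a hax b hbx hab
        · obtain ⟨c, hc, heq⟩ := hu
          exact absurd heq (tagL_ne_tagR).symm
        · obtain ⟨c, hc, heq⟩ := hv
          exact absurd heq (tagL_ne_tagR).symm
    have hss : z ⊆ tagR '' y2 := by
      rw [hzeq]; exact Set.image_mono hsub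
    have heq := hz.2 _ hz' hss
    refine Set.Subset.antisymm (fun e he => ?_) hsub
    have : tagR e ∈ z := heq ▸ ⟨e, he, rfl⟩
    exact ⟨hy2.1 he, this⟩
  · left
    push_neg at hR
    set x1 : Set ℕ := {e | e ∈ E1.ev ∧ tagL e ∈ z} with hx1def
    have hc1 : E1.Config x1 := by
      refine ⟨fun e he => he.1, fun e he f hf hle => ⟨hf, ?_⟩, fun e he f hf hc => ?_⟩
      · exact hz.1.2.1 (tagL e) he.2 (tagL f) (Or.inl ⟨f, hf, rfl⟩)
          (Or.inl ⟨f, hf, e, he.1, hle, rfl, rfl⟩)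
      · exact hz.1.2.2 _ he.2 _ hf.2 (Or.inl (Or.inl ⟨e, he.1, f, hf.1, hc, rfl, rfl⟩))
    have hzeq : z = tagL '' x1 := by
      ext u
      constructor
      · intro hu
        rcases hz.1.1 hu with ⟨e, he, rfl⟩ | ⟨e, he, rfl⟩
        · exact ⟨e, ⟨he, hu⟩, rfl⟩
        · exact absurd hu (hR e he)
      · rintro ⟨e, he, rfl⟩
        exact he.2
    refine ⟨x1, ⟨hc1, fun y1 hy1 hsub => ?_⟩, hzeq⟩
    have hz' : (esSum E1 E2).Config (tagL '' y1) := by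
      refine ⟨?_, ?_, ?_⟩
      · rintro u ⟨e, he, rfl⟩
        exact Or.inl ⟨e, hy1.1 he, rfl⟩
      · rintro v hv f hfev (⟨a, ha, b, hb, hab, rfl, rfl⟩ | ⟨a, ha, b, hb, hab, rfl, rfl⟩)
        · have hbx : b ∈ y1 := by
            obtain ⟨c, hc, heq⟩ := hv
            rwa [← tagL_inj heq]
          exact ⟨a, hy1.2.1 b hbx a ha hab, rfl⟩
        · obtain ⟨c, hc, heq⟩ := hv
          exact absurd heq (tagL_ne_tagR)
      · rintro u hu v hv ((⟨a, ha, b, hb, hab, rfl, rfl⟩ | ⟨a, ha, b, hb, hab, rfl, rfl⟩) |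
          ⟨a, ha, b, hb, (⟨rfl, rfl⟩ | ⟨rfl, rfl⟩)⟩)
        · have hax : a ∈ y1 := by
            obtain ⟨c, hc, heq⟩ := hu
            rwa [← tagL_inj heq]
          have hbx : b ∈ y1 := by
            obtain ⟨c, hc, heq⟩ := hv
            rwa [← tagL_inj heq]
          exact hy1.2.2 a hax b hbx hab
        · obtain ⟨c, hc, heq⟩ := hu
          exact absurd heq (tagL_ne_tagR)
        · obtain ⟨c, hc, heq⟩ := hv
          exact absurd heq (tagL_ne_tagR)
        · obtain ⟨c, hc, heq⟩ := hu
          exact absurd heq (tagL_ne_tagR)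
    have hss : z ⊆ tagL '' y1 := by
      rw [hzeq]; exact Set.image_mono hsub
    have heq := hz.2 _ hz' hss
    refine Set.Subset.antisymm (fun e he => ?_) hsub
    have : tagL e ∈ z := heq ▸ ⟨e, he, rfl⟩
    exact ⟨hy1.1 he, this⟩

lemma seq_maxc {E1 E2 : ES P M} (h1 : GoodES E1) (h2 : GoodES E2) {z : Set ℕ}
    (hz : z ∈ (esSeq E1 E2).MaxC) :
    ∃ x1 ∈ E1.MaxC, ∃ x2 ∈ E2.MaxC, z = tagL '' x1 ∪ (tagC (encSet x1)) '' x2 := by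
  set x1 : Set ℕ := {e | e ∈ E1.ev ∧ tagL e ∈ z} with hx1def
  have hc1 : E1.Config x1 := by
    refine ⟨fun e he => he.1, fun e he f hf hle => ⟨hf, ?_⟩, fun e he f hf hc => ?_⟩
    · exact hz.1.2.1 (tagL e) he.2 (tagL f) (Or.inl ⟨f, hf, rfl⟩)
        (Or.inl ⟨f, hf, e, he.1, hle, rfl, rfl⟩)
    · exact hz.1.2.2 _ he.2 _ hf.2 (Or.inl ⟨e, he.1, f, hf.1, hc, rfl, rfl⟩)
  by_cases hC : ∃ w ∈ E1.MaxC, ∃ f ∈ E2.ev, tagC (encSet w) f ∈ z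
  · obtain ⟨w, hw, f0, hf0, hf0z⟩ := hC
    -- all C-events of z live in the copy indexed by w
    have hA1 : ∀ w' ∈ E1.MaxC, ∀ f ∈ E2.ev, tagC (encSet w') f ∈ z → w' = w := by
      intro w' hw' f hf hfz
      by_contra hne
      exact hz.1.2.2 _ hfz _ hf0z
        (Or.inr (Or.inr (Or.inl ⟨w', hw', w, hw, hne, f, hf, f0, hf0, rfl, rfl⟩)))
    -- x1 ⊆ w
    have hA2 : x1 ⊆ w := by
      intro e he
      by_contra hew
      have hdc := dc_config h1 he.1
      have hnc : ¬ (∀ a ∈ w ∪ dc E1 e, ∀ b ∈ w ∪ dc E1 e, ¬ E1.conf a b) := by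
        intro hcf
        have hcfg : E1.Config (w ∪ dc E1 e) :=
          ⟨Set.union_subset hw.1.1 hdc.1.1,
           fun a ha f' hf' hle => by
             rcases ha with ha | ha
             · exact Or.inl (hw.1.2.1 a ha f' hf' hle)
             · exact Or.inr (hdc.1.2.1 a ha f' hf' hle), hcf⟩
        have := hw.2 _ hcfg Set.subset_union_left
        exact hew (this ▸ Or.inr hdc.2)
      push_neg at hnc
      obtain ⟨a, ha, b, hb, hab⟩ := hnc
      have hkey : ∃ b' ∈ w, E1.conf e b' := by
        rcases ha with ha | ha <;> rcases hb with hb | hb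
        · exact absurd hab (hw.1.2.2 a ha b hb)
        · exact ⟨a, ha, h1.conf_symm _ _ (conf_her_rtg h1 hab hb.2)⟩
        · exact ⟨b, hb, h1.conf_symm _ _ (conf_her_rtg h1 (h1.conf_symm _ _ hab) ha.2)⟩
        · exact absurd hab (hdc.1.2.2 a ha b hb)
      obtain ⟨b', hb', hcb⟩ := hkey
      exact hz.1.2.2 _ he.2 _ hf0z
        (Or.inr (Or.inr (Or.inr ⟨w, hw, e, he.1, ⟨b', hb', hcb⟩, f0, hf0, Or.inl ⟨rfl, rfl⟩⟩)))
    -- tagL '' w ⊆ z, hence w ⊆ x1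
    have hA3 : ∀ a ∈ w, tagL a ∈ z := by
      have hz' : (esSeq E1 E2).Config (z ∪ tagL '' w) := by
        refine ⟨Set.union_subset hz.1.1 (fun u => by
          rintro ⟨a, ha, rfl⟩; exact Or.inl ⟨a, hw.1.1 ha, rfl⟩), ?_, ?_⟩
        · rintro v hv f hfev hle
          rcases hv with hv | ⟨bb, hbb, rfl⟩
          · exact Or.inl (hz.1.2.1 v hv f hfev hle)
          · rcases hle with ⟨a, ha, b, hb, hab, rfl, heq⟩ |
              ⟨y, hy, a, ha, b, hb, hab, rfl, heq⟩ |
              ⟨y, hy, a, ha, b, hb, hs, rfl, heq⟩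
            · exact Or.inr ⟨a, hw.1.2.1 bb hbb a ha (tagL_inj heq ▸ hab), rfl⟩
            · exact absurd heq tagL_ne_tagC
            · exact absurd heq tagL_ne_tagC
        · have hLm : ∀ a, tagL a ∈ z ∪ tagL '' w → a ∈ E1.ev → a ∈ w := by
            rintro a (ha | ⟨c, hc, heq⟩) hev
            · exact hA2 ⟨hev, ha⟩
            · rwa [← tagL_inj heq]
          have hCm : ∀ x, x ∈ E1.MaxC → ∀ f, f ∈ E2.ev →
              tagC (encSet x) f ∈ z ∪ tagL '' w → x = w ∧ tagC (encSet x) f ∈ z := by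
            rintro x hx f hf (hu | ⟨c, hc, heq⟩)
            · exact ⟨hA1 x hx f hf hu, hu⟩
            · exact absurd heq tagL_ne_tagC
          rintro u hu v hv (⟨a, ha, b, hb, hcab, rfl, rfl⟩ |
            ⟨x, hx, a, ha, b, hb, hcab, rfl, rfl⟩ |
            ⟨x, hx, x', hx', hne, a, ha, b, hb, rfl, rfl⟩ |
            ⟨x, hx, a, ha, ⟨a', ha', hca⟩, f, hf, (⟨rfl, rfl⟩ | ⟨rfl, rfl⟩)⟩)
          · exact hw.1.2.2 a (hLm a hu ha) b (hLm b hv hb) hcab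
          · obtain ⟨hxw, huz⟩ := hCm x hx a ha hu
            obtain ⟨_, hvz⟩ := hCm x hx b hb hv
            exact hz.1.2.2 _ huz _ hvz (Or.inr (Or.inl ⟨x, hx, a, ha, b, hb, hcab, rfl, rfl⟩))
          · obtain ⟨hxw, _⟩ := hCm x hx a ha hu
            obtain ⟨hx'w, _⟩ := hCm x' hx' b hb hv
            exact hne (hxw.trans hx'w.symm)
          · obtain ⟨hxw, _⟩ := hCm x hx f hf hv
            subst hxw
            exact hw.1.2.2 a (hLm a hu ha) a' ha' hca
          · obtain ⟨hxw, _⟩ := hCm x hx f hf hu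
            subst hxw
            exact hw.1.2.2 a (hLm a hv ha) a' ha' hca
      have heq := hz.2 _ hz' Set.subset_union_left
      intro a haw
      exact heq ▸ Or.inr ⟨a, haw, rfl⟩
    have hx1w : x1 = w := Set.Subset.antisymm hA2 (fun a haw => ⟨hw.1.1 haw, hA3 a haw⟩)
    -- the E2 part
    set x2 : Set ℕ := {f | f ∈ E2.ev ∧ tagC (encSet w) f ∈ z} with hx2def
    have hc2 : E2.Config x2 := by
      refine ⟨fun e he => he.1, fun e he f hf hle => ⟨hf, ?_⟩, fun e he f hf hc => ?_⟩
      · exact hz.1.2.1 _ he.2 _ (Or.inr ⟨w, hw, f, hf, rfl⟩)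
          (Or.inr (Or.inl ⟨w, hw, f, hf, e, he.1, hle, rfl, rfl⟩))
      · exact hz.1.2.2 _ he.2 _ hf.2 (Or.inr (Or.inl ⟨w, hw, e, he.1, f, hf.1, hc, rfl, rfl⟩))
    have hm2 : x2 ∈ E2.MaxC := by
      refine ⟨hc2, fun y2 hy2 hsub => ?_⟩
      have hz'' : (esSeq E1 E2).Config (z ∪ (tagC (encSet w)) '' y2) := by
        have hLm : ∀ a, tagL a ∈ z ∪ (tagC (encSet w)) '' y2 → tagL a ∈ z := by
          rintro a (ha | ⟨c, hc, heq⟩)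
          · exact ha
          · exact absurd heq.symm tagL_ne_tagC
        have hCm : ∀ x, x ∈ E1.MaxC → ∀ f, f ∈ E2.ev →
            tagC (encSet x) f ∈ z ∪ (tagC (encSet w)) '' y2 → x = w ∧ f ∈ y2 := by
          rintro x hx f hf (hu | ⟨c, hc, heq⟩)
          · have hxw := hA1 x hx f hf hu
            exact ⟨hxw, hsub ⟨hf, hxw ▸ hu⟩⟩
          · obtain ⟨hk, he⟩ := tagC_inj heq
            exact ⟨(maxc_encSet_inj h1.fin hx hw hk.symm), he ▸ hc⟩
        refine ⟨Set.union_subset hz.1.1 (fun u => by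
          rintro ⟨f, hf, rfl⟩; exact Or.inr ⟨w, hw, f, hy2.1 hf, rfl⟩), ?_, ?_⟩
        · rintro v hv f hfev hle
          rcases hv with hv | ⟨bb, hbb, rfl⟩
          · exact Or.inl (hz.1.2.1 v hv f hfev hle)
          · rcases hle with ⟨a, ha, b, hb, hab, rfl, heq⟩ |
              ⟨y, hy, a, ha, b, hb, hab, rfl, heq⟩ |
              ⟨y, hy, a, ha, b, hb, hs, rfl, heq⟩
            · exact absurd heq.symm tagL_ne_tagC
            · obtain ⟨hk, hbe⟩ := tagC_inj heq
              have hyw : w = y := maxc_encSet_inj h1.fin hw hy hk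
              subst hyw
              exact Or.inr ⟨a, hy2.2.1 b (hbe ▸ hbb) a ha hab, rfl⟩
            · obtain ⟨hk, hbe⟩ := tagC_inj heq
              have hyw : w = y := maxc_encSet_inj h1.fin hw hy hk
              subst hyw
              exact Or.inl (hA3 a ha)
        · rintro u hu v hv (⟨a, ha, b, hb, hcab, rfl, rfl⟩ |
            ⟨x, hx, a, ha, b, hb, hcab, rfl, rfl⟩ |
            ⟨x, hx, x', hx', hne, a, ha, b, hb, rfl, rfl⟩ |
            ⟨x, hx, a, ha, ⟨a', ha', hca⟩, f, hf, (⟨rfl, rfl⟩ | ⟨rfl, rfl⟩)⟩)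
          · exact hz.1.2.2 _ (hLm a hu) _ (hLm b hv)
              (Or.inl ⟨a, ha, b, hb, hcab, rfl, rfl⟩)
          · obtain ⟨_, hay⟩ := hCm x hx a ha hu
            obtain ⟨_, hby⟩ := hCm x hx b hb hv
            exact hy2.2.2 a hay b hby hcab
          · obtain ⟨hxw, _⟩ := hCm x hx a ha hu
            obtain ⟨hx'w, _⟩ := hCm x' hx' b hb hv
            exact hne (hxw.trans hx'w.symm)
          · obtain ⟨hxw, _⟩ := hCm x hx f hf hv
            subst hxw
            have haw : a ∈ x := hx1w ▸ (⟨ha, hLm a hu⟩ : a ∈ x1)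
            exact hx.1.2.2 a haw a' ha' hca
          · obtain ⟨hxw, _⟩ := hCm x hx f hf hu
            subst hxw
            have haw : a ∈ x := hx1w ▸ (⟨ha, hLm a hv⟩ : a ∈ x1)
            exact hx.1.2.2 a haw a' ha' hca
      have heq := hz.2 _ hz'' Set.subset_union_left
      refine Set.Subset.antisymm (fun f hf => ?_) hsub
      have : tagC (encSet w) f ∈ z := heq ▸ Or.inr ⟨f, hf, rfl⟩
      exact ⟨hy2.1 hf, this⟩
    refine ⟨x1, ?_, x2, hm2, ?_⟩
    · rw [hx1w]; exact hw
    ext u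
    constructor
    · intro hu
      rcases hz.1.1 hu with ⟨e, he, rfl⟩ | ⟨x, hx, f, hf, rfl⟩
      · exact Or.inl ⟨e, ⟨he, hu⟩, rfl⟩
      · have hxw := hA1 x hx f hf hu
        subst hxw
        rw [hx1w]
        exact Or.inr ⟨f, ⟨hf, hu⟩, rfl⟩
    · rintro (⟨e, he, rfl⟩ | ⟨f, hf, rfl⟩)
      · exact he.2
      · rw [hx1w]
        exact hf.2
  · -- no copy events at all
    push_neg at hC
    have hzeq : z = tagL '' x1 := by
      ext u
      constructor
      · intro hu
        rcases hz.1.1 hu with ⟨e, he, rfl⟩ | ⟨x, hx, f, hf, rfl⟩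
        · exact ⟨e, ⟨he, hu⟩, rfl⟩
        · exact absurd hu (hC x hx f hf)
      · rintro ⟨e, he, rfl⟩
        exact he.2
    have hm1 : x1 ∈ E1.MaxC := by
      refine ⟨hc1, fun y1 hy1 hsub => ?_⟩
      have hz' : (esSeq E1 E2).Config (tagL '' y1) := by
        refine ⟨fun u => by rintro ⟨a, ha, rfl⟩; exact Or.inl ⟨a, hy1.1 ha, rfl⟩, ?_, ?_⟩
        · rintro v hv f hfev hle
          obtain ⟨bb, hbb, rfl⟩ := hv
          rcases hle with ⟨a, ha, b, hb, hab, rfl, heq⟩ |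
            ⟨y, hy, a, ha, b, hb, hab, rfl, heq⟩ |
            ⟨y, hy, a, ha, b, hb, hs, rfl, heq⟩
          · exact ⟨a, hy1.2.1 bb hbb a ha (tagL_inj heq ▸ hab), rfl⟩
          · exact absurd heq tagL_ne_tagC
          · exact absurd heq tagL_ne_tagC
        · have hLm : ∀ a, tagL a ∈ tagL '' y1 → a ∈ y1 := by
            rintro a ⟨c, hc, heq⟩
            rwa [← tagL_inj heq]
          have hCm : ∀ x f, tagC x f ∉ tagL '' y1 := by
            rintro x f ⟨c, hc, heq⟩
            exact absurd heq tagL_ne_tagC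
          rintro u hu v hv (⟨a, ha, b, hb, hcab, rfl, rfl⟩ |
            ⟨x, hx, a, ha, b, hb, hcab, rfl, rfl⟩ |
            ⟨x, hx, x', hx', hne, a, ha, b, hb, rfl, rfl⟩ |
            ⟨x, hx, a, ha, ⟨a', ha', hca⟩, f, hf, (⟨rfl, rfl⟩ | ⟨rfl, rfl⟩)⟩)
          · exact hy1.2.2 a (hLm a hu) b (hLm b hv) hcab
          · exact hCm _ _ hu
          · exact hCm _ _ hu
          · exact hCm _ _ hv
          · exact hCm _ _ hu
      have hss : z ⊆ tagL '' y1 := hzeq ▸ Set.image_mono hsub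
      have heq := hz.2 _ hz' hss
      refine Set.Subset.antisymm (fun e he => ?_) hsub
      have : tagL e ∈ z := heq ▸ ⟨e, he, rfl⟩
      exact ⟨hy1.1 he, this⟩
    have hm2 : (∅ : Set ℕ) ∈ E2.MaxC := by
      refine ⟨config_empty E2, fun y2 hy2 _ => ?_⟩
      have hz'' : (esSeq E1 E2).Config (z ∪ (tagC (encSet x1)) '' y2) := by
        have hLm : ∀ a, tagL a ∈ z ∪ (tagC (encSet x1)) '' y2 → tagL a ∈ z := by
          rintro a (ha | ⟨c, hc, heq⟩)
          · exact ha
          · exact absurd heq.symm tagL_ne_tagC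
        have hCm : ∀ x, x ∈ E1.MaxC → ∀ f, f ∈ E2.ev →
            tagC (encSet x) f ∈ z ∪ (tagC (encSet x1)) '' y2 → x = x1 ∧ f ∈ y2 := by
          rintro x hx f hf (hu | ⟨c, hc, heq⟩)
          · exact absurd hu (hC x hx f hf)
          · obtain ⟨hk, he⟩ := tagC_inj heq
            exact ⟨(maxc_encSet_inj h1.fin hx hm1 hk.symm), he ▸ hc⟩
        refine ⟨Set.union_subset hz.1.1 (fun u => by
          rintro ⟨f, hf, rfl⟩; exact Or.inr ⟨x1, hm1, f, hy2.1 hf, rfl⟩), ?_, ?_⟩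
        · rintro v hv f hfev hle
          rcases hv with hv | ⟨bb, hbb, rfl⟩
          · exact Or.inl (hz.1.2.1 v hv f hfev hle)
          · rcases hle with ⟨a, ha, b, hb, hab, rfl, heq⟩ |
              ⟨y, hy, a, ha, b, hb, hab, rfl, heq⟩ |
              ⟨y, hy, a, ha, b, hb, hs, rfl, heq⟩
            · exact absurd heq.symm tagL_ne_tagC
            · obtain ⟨hk, hbe⟩ := tagC_inj heq
              have hyw : y = x1 := maxc_encSet_inj h1.fin hy hm1 hk.symm
              subst hyw
              exact Or.inr ⟨a, hy2.2.1 b (hbe ▸ hbb) a ha hab, rfl⟩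
            · obtain ⟨hk, hbe⟩ := tagC_inj heq
              have hyw : y = x1 := maxc_encSet_inj h1.fin hy hm1 hk.symm
              subst hyw
              exact Or.inl ha.2
        · rintro u hu v hv (⟨a, ha, b, hb, hcab, rfl, rfl⟩ |
            ⟨x, hx, a, ha, b, hb, hcab, rfl, rfl⟩ |
            ⟨x, hx, x', hx', hne, a, ha, b, hb, rfl, rfl⟩ |
            ⟨x, hx, a, ha, ⟨a', ha', hca⟩, f, hf, (⟨rfl, rfl⟩ | ⟨rfl, rfl⟩)⟩)
          · exact hz.1.2.2 _ (hLm a hu) _ (hLm b hv)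
              (Or.inl ⟨a, ha, b, hb, hcab, rfl, rfl⟩)
          · obtain ⟨_, hay⟩ := hCm x hx a ha hu
            obtain ⟨_, hby⟩ := hCm x hx b hb hv
            exact hy2.2.2 a hay b hby hcab
          · obtain ⟨hxw, _⟩ := hCm x hx a ha hu
            obtain ⟨hx'w, _⟩ := hCm x' hx' b hb hv
            exact hne (hxw.trans hx'w.symm)
          · obtain ⟨hxw, _⟩ := hCm x hx f hf hv
            subst hxw
            exact hx.1.2.2 a (⟨ha, hLm a hu⟩ : a ∈ x1) a' ha' hca
          · obtain ⟨hxw, _⟩ := hCm x hx f hf hu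
            subst hxw
            exact hx.1.2.2 a (⟨ha, hLm a hv⟩ : a ∈ x1) a' ha' hca
      have heq := hz.2 _ hz'' Set.subset_union_left
      ext f
      simp only [Set.mem_empty_iff_false, iff_false]
      intro hf
      have : tagC (encSet x1) f ∈ z := heq ▸ Or.inr ⟨f, hf, rfl⟩
      exact hC x1 hm1 f (hy2.1 hf) this
    exact ⟨x1, hm1, ∅, hm2, by rw [hzeq, Set.image_empty, Set.union_empty]⟩

lemma sum_lbl_L (E1 E2 : ES P M) (e : ℕ) : (esSum E1 E2).lbl (tagL e) = E1.lbl e :=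
  tensor_lbl_L E1 E2 e

lemma sum_lbl_R (E1 E2 : ES P M) (e : ℕ) : (esSum E1 E2).lbl (tagR e) = E2.lbl e :=
  tensor_lbl_R E1 E2 e

lemma lbl_image {f g : ℕ → Label P M} {t : ℕ → ℕ} {x : Set ℕ}
    (h : ∀ e ∈ x, f (t e) = g e) : f '' (t '' x) = g '' x := by
  rw [Set.image_image]
  exact Set.image_congr h

lemma proj_rank {E : ES P M} (h : GoodES E) (A : P) : hasRank (E.proj A) := by
  obtain ⟨ρ, hρ⟩ := h.rank
  exact ⟨ρ, fun u v hle hne => hρ u v hle.1 hne⟩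

lemma proj_fin {E : ES P M} (h : GoodES E) (A : P) : (E.proj A).ev.Finite :=
  h.fin.subset (fun e he => he.1)

/-- If a participant occurs in every maximal configuration of `E1` then (given the
passivity/activity transfer) it occurs in every maximal configuration of `E2`. -/
lemma parts_sub {E1 E2 : ES P M} {S1 S2 : Set P} (h1 : GoodES E1) (h2 : GoodES E2)
    (hs1 : ∀ x ∈ E1.MaxC, sbjSet (E1.lbl '' x) = S1)
    (hs2 : ∀ x ∈ E2.MaxC, sbjSet (E2.lbl '' x) = S2)
    (hmin : ∀ B, minLblP E1 B ≠ ∅ → minLblP E2 B ≠ ∅) : S1 ⊆ S2 := by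
  intro B hB
  obtain ⟨x1, hx1, -⟩ := extend_to_max E1 h1.fin (config_empty E1)
  have hB1 : B ∈ sbjSet (E1.lbl '' x1) := (hs1 x1 hx1).symm ▸ hB
  obtain ⟨l, hl, hsbj⟩ := hB1
  obtain ⟨e, he, rfl⟩ := hl
  have h1ne : minLblP E1 B ≠ ∅ := by
    apply Set.Nonempty.ne_empty
    apply Set.Nonempty.image
    exact exists_minIn (E1.proj B) (proj_rank h1 B) (proj_fin h1 B)
      ⟨e, hx1.1.1 he, hsbj⟩
  have h2ne := hmin B h1ne
  obtain ⟨l2, hl2⟩ := Set.nonempty_iff_ne_empty.2 h2ne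
  obtain ⟨f, hfmin, rfl⟩ := hl2
  have hfev : f ∈ E2.ev ∧ (E2.lbl f).sbj = B := hfmin.1
  obtain ⟨x2, hx2, hfx2⟩ := mem_maxc h2 hfev.1
  rw [← hs2 x2 hx2]
  exact ⟨E2.lbl f, ⟨f, hfx2, rfl⟩, hfev.2⟩

/-- The main invariant of the semantics. -/
theorem gsem_inv [Nonempty P] [Nonempty M] : ∀ (G : GC P M) (E : ES P M), gsem G = some E →
    GoodES E ∧ ∀ x ∈ E.MaxC,
      E.lbl '' E.minIn x ⊆ Lout ∧ E.lbl '' E.maxIn x ⊆ Lin ∧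
      sbjSet (E.lbl '' x) = parts G := by
  intro G
  induction G with
  | nil =>
    intro E hsem
    simp only [gsem, Option.some.injEq] at hsem
    subst hsem
    refine ⟨good_esEmpty, fun x hx => ?_⟩
    have hx0 : x = ∅ := Set.eq_empty_of_subset_empty hx.1.1
    subst hx0
    have hmin : (esEmpty : ES P M).minIn (∅ : Set ℕ) = (∅ : Set ℕ) :=
      Set.eq_empty_of_subset_empty (fun e he => he.1)
    have hmax : (esEmpty : ES P M).maxIn (∅ : Set ℕ) = (∅ : Set ℕ) :=
      Set.eq_empty_of_subset_empty (fun e he => he.1)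
    rw [hmin, hmax]
    simp [sbjSet, parts]
  | act a b m =>
    intro E hsem
    by_cases hab : a = b
    · simp [gsem, hab] at hsem
    · simp only [gsem, if_neg hab, Option.some.injEq] at hsem
      subst hsem
      refine ⟨good_esAct a b m, fun x hx => ?_⟩
      have h01 : (esAct a b m : ES P M).Config {0, 1} := by
        refine ⟨by intro e he; exact he, fun e he f hf _ => hf, fun e _ f _ hc => hc⟩
      have hx01 : x = ({0, 1} : Set ℕ) := (hx.2 _ h01 hx.1.1).symm ▸ rfl
      subst hx01
      have hle01 : (esAct a b m : ES P M).le 0 1 := Or.inr (Or.inl ⟨rfl, rfl⟩)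
      refine ⟨?_, ?_, ?_⟩
      · rintro l ⟨u, hu, rfl⟩
        have hu' : u = 0 ∨ u = 1 := by
          simpa [Set.mem_insert_iff, Set.mem_singleton_iff] using hu.1
        have hu0 : u = 0 := by
          rcases hu' with h | h
          · exact h
          · subst h
            exact absurd (hu.2 0 (Or.inl rfl) hle01) (by decide)
        subst hu0
        exact ⟨a, b, m, hab, by simp [esAct]⟩
      · rintro l ⟨u, hu, rfl⟩
        have hu' : u = 0 ∨ u = 1 := by
          simpa [Set.mem_insert_iff, Set.mem_singleton_iff] using hu.1
        have hu1 : u = 1 := by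
          rcases hu' with h | h
          · subst h
            exact absurd (hu.2 1 (Or.inr rfl) hle01) (by decide)
          · exact h
        subst hu1
        exact ⟨a, b, m, hab, by simp [esAct]⟩
      · have himg : (esAct a b m : ES P M).lbl '' {0, 1} =
            {Label.out a b m, Label.inp a b m} := by
          rw [Set.image_insert_eq, Set.image_singleton]
          simp [esAct]
        rw [himg]
        rw [sbjSet, Set.image_insert_eq, Set.image_singleton]
        simp [Label.sbj, parts]
  | seq g1 g2 ih1 ih2 =>
    intro E hsem
    cases h1 : gsem (P := P) (M := M) g1 with
    | none => simp only [gsem, h1] at hsem; exact nomatch hsem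
    | some E1 =>
      cases h2 : gsem (P := P) (M := M) g2 with
      | none => simp only [gsem, h1, h2] at hsem; exact nomatch hsem
      | some E2 =>
        simp only [gsem, h1, h2, Option.some.injEq] at hsem
        subst hsem
        obtain ⟨hg1, hi1⟩ := ih1 E1 h1
        obtain ⟨hg2, hi2⟩ := ih2 E2 h2
        refine ⟨good_seq hg1 hg2, fun z hz => ?_⟩
        obtain ⟨x1, hx1, x2, hx2, rfl⟩ := seq_maxc hg1 hg2 hz
        obtain ⟨hmin1, hmax1, hsbj1⟩ := hi1 x1 hx1
        obtain ⟨hmin2, hmax2, hsbj2⟩ := hi2 x2 hx2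
        refine ⟨?_, ?_, ?_⟩
        · rintro l ⟨u, hu, rfl⟩
          rcases hu.1 with ⟨e, he, rfl⟩ | ⟨f, hf, rfl⟩
          · have hemin : e ∈ E1.minIn x1 :=
              ⟨he, fun f hf hlef => tagL_inj (hu.2 (tagL f) (Or.inl ⟨f, hf, rfl⟩)
                (Or.inl ⟨f, hx1.1.1 hf, e, hx1.1.1 he, hlef, rfl, rfl⟩))⟩
            rw [seq_lbl_L]
            exact hmin1 ⟨e, hemin, rfl⟩
          · have hfmin : f ∈ E2.minIn x2 :=
              ⟨hf, fun f' hf' hlef => (tagC_inj (hu.2 _ (Or.inr ⟨f', hf', rfl⟩)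
                (Or.inr (Or.inl ⟨x1, hx1, f', hx2.1.1 hf', f, hx2.1.1 hf, hlef, rfl, rfl⟩)))).2⟩
            rw [seq_lbl_C]
            exact hmin2 ⟨f, hfmin, rfl⟩
        · rintro l ⟨u, hu, rfl⟩
          rcases hu.1 with ⟨e, he, rfl⟩ | ⟨f, hf, rfl⟩
          · have hemax : e ∈ E1.maxIn x1 :=
              ⟨he, fun f hf hlef => tagL_inj (hu.2 (tagL f) (Or.inl ⟨f, hf, rfl⟩)
                (Or.inl ⟨e, hx1.1.1 he, f, hx1.1.1 hf, hlef, rfl, rfl⟩))⟩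
            rw [seq_lbl_L]
            exact hmax1 ⟨e, hemax, rfl⟩
          · have hfmax : f ∈ E2.maxIn x2 :=
              ⟨hf, fun f' hf' hlef => (tagC_inj (hu.2 _ (Or.inr ⟨f', hf', rfl⟩)
                (Or.inr (Or.inl ⟨x1, hx1, f, hx2.1.1 hf, f', hx2.1.1 hf', hlef, rfl, rfl⟩)))).2⟩
            rw [seq_lbl_C]
            exact hmax2 ⟨f, hfmax, rfl⟩
        · rw [Set.image_union,
            lbl_image (fun e _ => seq_lbl_L E1 E2 e),
            lbl_image (fun e _ => seq_lbl_C E1 E2 (encSet x1) e),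
            sbjSet, Set.image_union, ← sbjSet, ← sbjSet, hsbj1, hsbj2]
          rfl
  | par g1 g2 ih1 ih2 =>
    intro E hsem
    cases h1 : gsem (P := P) (M := M) g1 with
    | none => simp only [gsem, h1] at hsem; exact nomatch hsem
    | some E1 =>
      cases h2 : gsem (P := P) (M := M) g2 with
      | none => simp only [gsem, h1, h2] at hsem; exact nomatch hsem
      | some E2 =>
        simp only [gsem, h1, h2] at hsem
        by_cases hd : Disjoint E1.lblSet E2.lblSet
        · rw [if_pos hd] at hsem
          simp only [Option.some.injEq] at hsem
          subst hsem
          obtain ⟨hg1, hi1⟩ := ih1 E1 h1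
          obtain ⟨hg2, hi2⟩ := ih2 E2 h2
          refine ⟨good_tensor hg1 hg2, fun z hz => ?_⟩
          obtain ⟨x1, hx1, x2, hx2, rfl⟩ := tensor_maxc hg1 hg2 hz
          obtain ⟨hmin1, hmax1, hsbj1⟩ := hi1 x1 hx1
          obtain ⟨hmin2, hmax2, hsbj2⟩ := hi2 x2 hx2
          refine ⟨?_, ?_, ?_⟩
          · rintro l ⟨u, hu, rfl⟩
            rcases hu.1 with ⟨e, he, rfl⟩ | ⟨f, hf, rfl⟩
            · have hemin : e ∈ E1.minIn x1 :=
                ⟨he, fun f hf hlef => tagL_inj (hu.2 (tagL f) (Or.inl ⟨f, hf, rfl⟩)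
                  (Or.inl ⟨f, hx1.1.1 hf, e, hx1.1.1 he, hlef, rfl, rfl⟩))⟩
              rw [tensor_lbl_L]
              exact hmin1 ⟨e, hemin, rfl⟩
            · have hfmin : f ∈ E2.minIn x2 :=
                ⟨hf, fun f' hf' hlef => tagR_inj (hu.2 (tagR f') (Or.inr ⟨f', hf', rfl⟩)
                  (Or.inr ⟨f', hx2.1.1 hf', f, hx2.1.1 hf, hlef, rfl, rfl⟩))⟩
              rw [tensor_lbl_R]
              exact hmin2 ⟨f, hfmin, rfl⟩
          · rintro l ⟨u, hu, rfl⟩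
            rcases hu.1 with ⟨e, he, rfl⟩ | ⟨f, hf, rfl⟩
            · have hemax : e ∈ E1.maxIn x1 :=
                ⟨he, fun f hf hlef => tagL_inj (hu.2 (tagL f) (Or.inl ⟨f, hf, rfl⟩)
                  (Or.inl ⟨e, hx1.1.1 he, f, hx1.1.1 hf, hlef, rfl, rfl⟩))⟩
              rw [tensor_lbl_L]
              exact hmax1 ⟨e, hemax, rfl⟩
            · have hfmax : f ∈ E2.maxIn x2 :=
                ⟨hf, fun f' hf' hlef => tagR_inj (hu.2 (tagR f') (Or.inr ⟨f', hf', rfl⟩)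
                  (Or.inr ⟨f, hx2.1.1 hf, f', hx2.1.1 hf', hlef, rfl, rfl⟩))⟩
              rw [tensor_lbl_R]
              exact hmax2 ⟨f, hfmax, rfl⟩
          · rw [Set.image_union,
              lbl_image (fun e _ => tensor_lbl_L E1 E2 e),
              lbl_image (fun e _ => tensor_lbl_R E1 E2 e),
              sbjSet, Set.image_union, ← sbjSet, ← sbjSet, hsbj1, hsbj2]
            rfl
        · rw [if_neg hd] at hsem
          exact absurd hsem (by simp)
  | cho g1 g2 ih1 ih2 =>
    intro E hsem
    cases h1 : gsem (P := P) (M := M) g1 with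
    | none => simp only [gsem, h1] at hsem; exact nomatch hsem
    | some E1 =>
      cases h2 : gsem (P := P) (M := M) g2 with
      | none => simp only [gsem, h1, h2] at hsem; exact nomatch hsem
      | some E2 =>
        simp only [gsem, h1, h2] at hsem
        by_cases hwb : wb E1 E2
        · rw [if_pos hwb] at hsem
          simp only [Option.some.injEq] at hsem
          subst hsem
          obtain ⟨hg1, hi1⟩ := ih1 E1 h1
          obtain ⟨hg2, hi2⟩ := ih2 E2 h2
          have hs1 : ∀ x ∈ E1.MaxC, sbjSet (E1.lbl '' x) = parts g1 :=
            fun x hx => (hi1 x hx).2.2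
          have hs2 : ∀ x ∈ E2.MaxC, sbjSet (E2.lbl '' x) = parts g2 :=
            fun x hx => (hi2 x hx).2.2
          obtain ⟨A, hA, _, hpass⟩ := hwb
          have hd12 : ∀ B, minLblP E1 B ≠ ∅ → minLblP E2 B ≠ ∅ := by
            intro B hB
            by_cases hBA : B = A
            · exact hBA ▸ hA.2.1
            · exact fun h0 => hB (((hpass B hBA).2.2).mpr h0)
          have hd21 : ∀ B, minLblP E2 B ≠ ∅ → minLblP E1 B ≠ ∅ := by
            intro B hB
            by_cases hBA : B = A
            · exact hBA ▸ hA.1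
            · exact fun h0 => hB (((hpass B hBA).2.2).mp h0)
          have hparts : parts g1 = parts g2 :=
            Set.Subset.antisymm (parts_sub hg1 hg2 hs1 hs2 hd12)
              (parts_sub hg2 hg1 hs2 hs1 hd21)
          have hpu : parts g1 ∪ parts g2 = parts g1 := by
            rw [hparts, Set.union_self]
          refine ⟨good_sum hg1 hg2, fun z hz => ?_⟩
          rcases sum_maxc hg1 hg2 hz with ⟨x1, hx1, rfl⟩ | ⟨x2, hx2, rfl⟩
          · obtain ⟨hmin1, hmax1, hsbj1⟩ := hi1 x1 hx1
            refine ⟨?_, ?_, ?_⟩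
            · rintro l ⟨u, hu, rfl⟩
              obtain ⟨e, he, rfl⟩ := hu.1
              have hemin : e ∈ E1.minIn x1 :=
                ⟨he, fun f hf hlef => tagL_inj (hu.2 (tagL f) ⟨f, hf, rfl⟩
                  (Or.inl ⟨f, hx1.1.1 hf, e, hx1.1.1 he, hlef, rfl, rfl⟩))⟩
              rw [sum_lbl_L]
              exact hmin1 ⟨e, hemin, rfl⟩
            · rintro l ⟨u, hu, rfl⟩
              obtain ⟨e, he, rfl⟩ := hu.1
              have hemax : e ∈ E1.maxIn x1 :=
                ⟨he, fun f hf hlef => tagL_inj (hu.2 (tagL f) ⟨f, hf, rfl⟩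
                  (Or.inl ⟨e, hx1.1.1 he, f, hx1.1.1 hf, hlef, rfl, rfl⟩))⟩
              rw [sum_lbl_L]
              exact hmax1 ⟨e, hemax, rfl⟩
            · rw [show (esSum E1 E2).lbl '' (tagL '' x1) = E1.lbl '' x1 from
                lbl_image (fun e _ => sum_lbl_L E1 E2 e), hsbj1]
              show parts g1 = parts g1 ∪ parts g2
              rw [hparts, Set.union_self]
          · obtain ⟨hmin2, hmax2, hsbj2⟩ := hi2 x2 hx2
            refine ⟨?_, ?_, ?_⟩
            · rintro l ⟨u, hu, rfl⟩
              obtain ⟨e, he, rfl⟩ := hu.1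
              have hemin : e ∈ E2.minIn x2 :=
                ⟨he, fun f hf hlef => tagR_inj (hu.2 (tagR f) ⟨f, hf, rfl⟩
                  (Or.inr ⟨f, hx2.1.1 hf, e, hx2.1.1 he, hlef, rfl, rfl⟩))⟩
              rw [sum_lbl_R]
              exact hmin2 ⟨e, hemin, rfl⟩
            · rintro l ⟨u, hu, rfl⟩
              obtain ⟨e, he, rfl⟩ := hu.1
              have hemax : e ∈ E2.maxIn x2 :=
                ⟨he, fun f hf hlef => tagR_inj (hu.2 (tagR f) ⟨f, hf, rfl⟩
                  (Or.inr ⟨e, hx2.1.1 he, f, hx2.1.1 hf, hlef, rfl, rfl⟩))⟩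
              rw [sum_lbl_R]
              exact hmax2 ⟨e, hemax, rfl⟩
            · rw [show (esSum E1 E2).lbl '' (tagR '' x2) = E2.lbl '' x2 from
                lbl_image (fun e _ => sum_lbl_R E1 E2 e), hsbj2]
              show parts g2 = parts (GC.cho g1 g2)
              show parts g2 = parts g1 ∪ parts g2
              rw [hparts, Set.union_self]
        · rw [if_neg hwb] at hsem
          exact absurd hsem (by simp)

end MinMaxAux







/-- Lemma (min-max): for a ground well-formed `G` with `⟦G⟧ ≠ ε` and any maximal
configuration `x` of `⟦G⟧`: (1) the minimal events of `x` are nonempty with output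
labels, the maximal events of `x` are nonempty with input labels; (2) the subjects of
the labels of `x` are exactly `P(G)`. -/
theorem min_max_lemma {P M : Type} [Infinite P] [Infinite M]
    {G : GC P M} {E : ES P M}
    (hsem : gsem G = some E) (hne : E.ev ≠ ∅) :
    ∀ x ∈ E.MaxC,
      (E.minIn x ≠ ∅ ∧ E.lbl '' E.minIn x ⊆ Lout ∧
        E.maxIn x ≠ ∅ ∧ E.lbl '' E.maxIn x ⊆ Lin) ∧
      sbjSet (E.lbl '' x) = parts G := by
  obtain ⟨hg, hinv⟩ := gsem_inv G E hsem
  intro x hx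
  obtain ⟨hmin, hmax, hsbj⟩ := hinv x hx
  have hxne : x.Nonempty := maxc_nonempty hg hne hx
  have hxfin : x.Finite := hg.fin.subset hx.1.1
  refine ⟨⟨?_, hmin, ?_, hmax⟩, hsbj⟩
  · exact (exists_minIn E hg.rank hxfin hxne).ne_empty
  · exact (exists_maxIn E hg.rank hxfin hxne).ne_empty

end Choreo
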